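/- arXiv:1711.04900 — 5 statements merged into one kernel-verified Lean document; each statement's English description precedes it below -/
import Mathlib

section
/- Fix k ≥ 2 and n ≥ 1, and let p_k = 2^k/(k+1). There exist τ > 0 and C = C(k,n) < ∞ such that for all measurable sets E_α ⊂ ℝⁿ of finite measure (α ∈ {0,1}^k), T_k(1_{E_α} : α ∈ {0,1}^k) ≤ C · ρ(λ(E_α) : α)^τ · ∏_α (λ(E_α))^{1/p_k}, where ρ(c_α : α) = min over pairs β ≠ γ of c_β/c_γ. -/
open MeasureTheory
open scoped ENNReal

namespace GowersGain

variable {k n : ℕ}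

local notation "Eu" => EuclideanSpace ℝ (Fin n)

noncomputable def S (c : Fin k → ℝ) : (Fin k → Eu) →ₗ[ℝ] Eu :=
  ∑ m, c m • LinearMap.proj m

lemma S_apply (c : Fin k → ℝ) (h : Fin k → Eu) : S c h = ∑ m, c m • h m := by
  simp [S]

def bv (β : Fin k → Bool) : Fin k → ℝ := fun m => if β m then 1 else 0

def flipv (β : Fin k → Bool) (l : Fin k) : Fin k → Bool :=
  fun m => if m = l then !β m else β m

lemma flipv_self (β : Fin k → Bool) (l : Fin k) : flipv β l l = !β l := by simp [flipv]

lemma flipv_ne (β : Fin k → Bool) {l m : Fin k} (h : m ≠ l) : flipv β l m = β m := by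
  simp [flipv, h]

lemma flipv_flipv (β : Fin k → Bool) (l : Fin k) : flipv (flipv β l) l = β := by
  funext m
  by_cases h : m = l <;> simp [flipv, h]

lemma flipv_bijective (l : Fin k) : Function.Bijective (fun β => flipv β l) :=
  Function.Involutive.bijective (fun β => flipv_flipv β l)

def dv (β v : Fin k → Bool) (i : Fin k) : Fin k → Fin k → ℝ :=
  fun l => if l = i then (fun m => bv v m - bv β m)
           else (fun m => if m = l then 1 - 2 * bv β l else 0)

noncomputable def Φ (β v : Fin k → Bool) (i : Fin k) :
    (Eu × (Fin k → Eu)) →ₗ[ℝ] (Eu × (Fin k → Eu)) :=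
  LinearMap.prod
    (LinearMap.fst ℝ Eu (Fin k → Eu) + (S (bv β)).comp (LinearMap.snd ℝ Eu (Fin k → Eu)))
    (LinearMap.pi fun l =>
      LinearMap.fst ℝ Eu (Fin k → Eu) + (S (bv β)).comp (LinearMap.snd ℝ Eu (Fin k → Eu))
        + (S (dv β v i l)).comp (LinearMap.snd ℝ Eu (Fin k → Eu)))

lemma Φ_fst (β v : Fin k → Bool) (i : Fin k) (z : Eu × (Fin k → Eu)) :
    (Φ β v i z).1 = z.1 + S (bv β) z.2 := rfl

lemma Φ_snd (β v : Fin k → Bool) (i : Fin k) (z : Eu × (Fin k → Eu)) (l : Fin k) :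
    (Φ β v i z).2 l = z.1 + S (bv β) z.2 + S (dv β v i l) z.2 := rfl

lemma S_dv_ne (β v : Fin k → Bool) {i l : Fin k} (hl : l ≠ i) (h : Fin k → Eu) :
    S (dv β v i l) h = (1 - 2 * bv β l) • h l := by
  rw [S_apply]
  rw [Finset.sum_eq_single l]
  · simp [dv, hl]
  · intro m _ hm
    simp [dv, hl, hm]
  · intro hmem; exact absurd (Finset.mem_univ l) hmem

lemma S_dv_i (β v : Fin k → Bool) (i : Fin k) (h : Fin k → Eu) :
    S (dv β v i i) h = ∑ m, (bv v m - bv β m) • h m := by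
  rw [S_apply]; simp [dv]

lemma coeff_ne_zero (β : Fin k → Bool) (l : Fin k) : (1 : ℝ) - 2 * bv β l ≠ 0 := by
  by_cases h : β l <;> simp [bv, h] <;> norm_num

lemma Φ_inj (β v : Fin k → Bool) (i : Fin k) (hvi : v i ≠ β i) :
    Function.Injective (Φ (n := n) β v i) := by
  rw [← LinearMap.ker_eq_bot, LinearMap.ker_eq_bot']
  intro z hz
  have h1 : z.1 + S (bv β) z.2 = 0 := congrArg Prod.fst hz
  have h2 : ∀ l, S (dv β v i l) z.2 = 0 := by
    intro l
    have h := congrFun (congrArg Prod.snd hz) l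
    rw [Φ_snd] at h
    rw [h1, zero_add] at h
    exact h
  have hne : ∀ l, l ≠ i → z.2 l = 0 := by
    intro l hl
    have h := h2 l
    rw [S_dv_ne β v hl] at h
    exact (smul_eq_zero.mp h).resolve_left (coeff_ne_zero β l)
  have hii : z.2 i = 0 := by
    have h := h2 i
    rw [S_dv_i] at h
    rw [Finset.sum_eq_single i] at h
    · have hc : bv v i - bv β i ≠ 0 := by
        by_cases h1 : v i <;> by_cases h2 : β i <;> simp [bv, h1, h2] at hvi ⊢ <;> norm_num
      exact (smul_eq_zero.mp h).resolve_left hc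
    · intro m _ hm; rw [hne m hm, smul_zero]
    · intro hmem; exact absurd (Finset.mem_univ i) hmem
  have hz2 : z.2 = 0 := by
    funext l
    by_cases hl : l = i
    · rw [hl]; exact hii
    · exact hne l hl
  have hz1 : z.1 = 0 := by
    have := h1
    rw [hz2, map_zero, add_zero] at this
    exact this
  exact Prod.ext hz1 hz2

lemma Φ_det_ne (β v : Fin k → Bool) (i : Fin k) (hvi : v i ≠ β i) :
    LinearMap.det (Φ (n := n) β v i) ≠ 0 := by
  have hinj := Φ_inj (n := n) β v i hvi
  have hsurj := (LinearMap.injective_iff_surjective).mp hinj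
  have hunit : IsUnit (Φ (n := n) β v i) :=
    (Module.End.isUnit_iff _).mpr ⟨hinj, hsurj⟩
  exact (hunit.map LinearMap.det).ne_zero


noncomputable def C0 (k n : ℕ) : ℝ :=
  1 + ∑ t : ((Fin k → Bool) × (Fin k → Bool) × Fin k),
        |(LinearMap.det (Φ (n := n) t.1 t.2.1 t.2.2))⁻¹|

lemma one_le_C0 (k n : ℕ) : 1 ≤ C0 k n :=
  le_add_of_nonneg_right (Finset.sum_nonneg fun _ _ => abs_nonneg _)

lemma det_le_C0 (β v : Fin k → Bool) (i : Fin k) :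
    |(LinearMap.det (Φ (n := n) β v i))⁻¹| ≤ C0 k n := by
  have h := Finset.single_le_sum
    (f := fun t : ((Fin k → Bool) × (Fin k → Bool) × Fin k) =>
      |(LinearMap.det (Φ (n := n) t.1 t.2.1 t.2.2))⁻¹|)
    (fun _ _ => abs_nonneg _) (Finset.mem_univ (β, v, i))
  simp only [C0]
  linarith

noncomputable def TT (Es : (Fin k → Bool) → Set (EuclideanSpace ℝ (Fin n))) : ℝ≥0∞ :=
  ∫⁻ z : EuclideanSpace ℝ (Fin n) × (Fin k → EuclideanSpace ℝ (Fin n)),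
    ∏ α : Fin k → Bool,
      (Es α).indicator (fun _ => (1 : ℝ≥0∞)) (z.1 + ∑ i, if α i then z.2 i else 0)

lemma key (Es : (Fin k → Bool) → Set (EuclideanSpace ℝ (Fin n)))
    (hE : ∀ α, MeasurableSet (Es α)) (β v : Fin k → Bool) (i : Fin k)
    (hvi : v i ≠ β i) :
    TT Es ≤ ENNReal.ofReal (C0 k n) *
      (volume (Es β) * (volume (Es v) *
        ∏ l ∈ Finset.univ.erase i, volume (Es (flipv β l)))) := by
  classical
  haveI hpi : Measure.IsAddHaarMeasure (volume : Measure (Fin k → Eu)) :=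
    Measure.pi.isAddHaarMeasure _
  haveI : Measure.IsAddHaarMeasure (volume : Measure (Eu × (Fin k → Eu))) :=
    Measure.prod.instIsAddHaarMeasure _ _
  set γ : Fin k → (Fin k → Bool) := fun l => if l = i then v else flipv β l with hγ
  have hγi : γ i = v := by simp [hγ]
  have hγne : ∀ {l}, l ≠ i → γ l = flipv β l := fun hl => by simp [hγ, hl]
  have hγβ : ∀ l, γ l ≠ β := by
    intro l
    by_cases hl : l = i
    · subst hl
      rw [hγi]
      intro h; exact hvi (by rw [h])
    · rw [hγne hl]
      intro h
      have := congrFun h l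
      rw [flipv_self] at this
      exact Bool.not_ne_self _ this
  have hγinj : Function.Injective γ := by
    intro l1 l2 h
    by_cases h1 : l1 = i <;> by_cases h2 : l2 = i
    · rw [h1, h2]
    · exfalso
      rw [h1, hγi, hγne h2] at h
      have := congrFun h i
      rw [flipv_ne β (fun hc => h2 hc.symm)] at this
      exact hvi this
    · exfalso
      rw [h2, hγi, hγne h1] at h
      have := congrFun h.symm i
      rw [flipv_ne β (fun hc => h1 hc.symm)] at this
      exact hvi this
    · rw [hγne h1, hγne h2] at h
      by_contra hne
      have := congrFun h l1
      rw [flipv_self, flipv_ne β hne] at this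
      exact Bool.not_ne_self _ this
  set P : Set (Eu × (Fin k → Eu)) := (Es β) ×ˢ Set.univ.pi (fun l => Es (γ l)) with hP
  have hPmeas : MeasurableSet P := (hE β).prod (MeasurableSet.univ_pi fun l => hE (γ l))
  have hcont : Continuous (Φ (n := n) β v i) :=
    LinearMap.continuous_of_finiteDimensional _
  -- pointwise bound
  have hpt : ∀ z : Eu × (Fin k → Eu),
      (∏ α : Fin k → Bool,
        (Es α).indicator (fun _ => (1:ℝ≥0∞)) (z.1 + ∑ m, if α m then z.2 m else 0))
      ≤ P.indicator (fun _ => (1:ℝ≥0∞)) (Φ (n := n) β v i z) := by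
    intro z
    set f : (Fin k → Bool) → ℝ≥0∞ := fun α =>
      (Es α).indicator (fun _ => (1:ℝ≥0∞)) (z.1 + ∑ m, if α m then z.2 m else 0) with hf
    have hble : ∀ α, f α ≤ 1 := by
      intro α; rw [hf]; simp only [Set.indicator_apply]; split <;> simp
    have hβnotmem : β ∉ Finset.image γ Finset.univ := by
      simp only [Finset.mem_image, Finset.mem_univ, true_and, not_exists]
      intro l; exact hγβ l
    set T : Finset (Fin k → Bool) := insert β (Finset.image γ Finset.univ) with hT
    have h1 : (∏ α : Fin k → Bool, f α) ≤ ∏ α ∈ T, f α := by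
      rw [← Finset.prod_sdiff (Finset.subset_univ T)]
      calc (∏ α ∈ Finset.univ \ T, f α) * ∏ α ∈ T, f α
          ≤ 1 * ∏ α ∈ T, f α :=
            mul_le_mul_left (Finset.prod_le_one (fun _ _ => zero_le) (fun α _ => hble α)) _
        _ = ∏ α ∈ T, f α := one_mul _
    have h2 : ∏ α ∈ T, f α = f β * ∏ l, f (γ l) := by
      rw [hT, Finset.prod_insert hβnotmem, Finset.prod_image (fun a _ b _ h => hγinj h)]
    -- argument identities
    have harg0 : z.1 + (∑ m, if β m then z.2 m else 0) = (Φ (n := n) β v i z).1 := by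
      rw [Φ_fst, S_apply]
      congr 1
      refine Finset.sum_congr rfl (fun m _ => ?_)
      by_cases h : β m <;> simp [bv, h]
    have harg : ∀ l, z.1 + (∑ m, if γ l m then z.2 m else 0) = (Φ (n := n) β v i z).2 l := by
      intro l
      rw [Φ_snd, S_apply, S_apply, add_assoc, ← Finset.sum_add_distrib]
      congr 1
      refine Finset.sum_congr rfl (fun m _ => ?_)
      by_cases hl : l = i
      · have hdv : dv β v i l m = bv v m - bv β m := by simp [dv, hl]
        have hγl : γ l = v := by simp [hγ, hl]
        rw [hγl, hdv, show bv β m • z.2 m + (bv v m - bv β m) • z.2 m = bv v m • z.2 m by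
          rw [sub_smul]; abel]
        by_cases h : v m <;> simp [bv, h]
      · have hγl : γ l = flipv β l := hγne hl
        have hdv : dv β v i l m = if m = l then 1 - 2 * bv β l else 0 := by simp [dv, hl]
        rw [hγl, hdv]
        by_cases hm : m = l
        · subst hm
          rw [if_pos rfl, flipv_self]
          cases hb : β m with
          | false => simp [bv, hb]
          | true => simp [bv, hb]; module
        · rw [if_neg hm, zero_smul, add_zero, flipv_ne β hm]
          by_cases h : β m <;> simp [bv, h]
    have h3 : f β * ∏ l, f (γ l) = P.indicator (fun _ => (1:ℝ≥0∞)) (Φ (n := n) β v i z) := by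
      rw [hf]
      simp only [harg0, harg]
      simp only [Set.indicator_apply]
      rw [Fintype.prod_boole]
      by_cases hm1 : (Φ (n := n) β v i z).1 ∈ Es β <;>
        by_cases hm2 : ∀ l, (Φ (n := n) β v i z).2 l ∈ Es (γ l) <;>
        simp [hP, Set.mem_prod, Set.mem_pi, hm1, hm2]
    calc (∏ α : Fin k → Bool, f α) ≤ ∏ α ∈ T, f α := h1
      _ = f β * ∏ l, f (γ l) := h2
      _ = P.indicator (fun _ => (1:ℝ≥0∞)) (Φ (n := n) β v i z) := h3
  have hvolP : volume P = volume (Es β) * (volume (Es v) *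
      ∏ l ∈ Finset.univ.erase i, volume (Es (flipv β l))) := by
    rw [hP, Measure.volume_eq_prod, Measure.prod_prod, volume_pi, Measure.pi_pi]
    congr 1
    rw [← Finset.mul_prod_erase Finset.univ (fun l => volume (Es (γ l))) (Finset.mem_univ i),
      hγi]
    congr 1
    exact Finset.prod_congr rfl (fun l hl => by rw [hγne (Finset.ne_of_mem_erase hl)])
  calc TT Es ≤ ∫⁻ z : Eu × (Fin k → Eu),
        P.indicator (fun _ => (1:ℝ≥0∞)) (Φ (n := n) β v i z) := lintegral_mono hpt
    _ = ∫⁻ z : Eu × (Fin k → Eu),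
        ((Φ (n := n) β v i) ⁻¹' P).indicator (fun _ => (1:ℝ≥0∞)) z := by
        exact lintegral_congr fun z => by simp [Set.indicator_apply, Set.mem_preimage]
    _ = volume ((Φ (n := n) β v i) ⁻¹' P) :=
        lintegral_indicator_one (hPmeas.preimage hcont.measurable)
    _ = ENNReal.ofReal |(LinearMap.det (Φ (n := n) β v i))⁻¹| * volume P :=
        Measure.addHaar_preimage_linearMap volume (Φ_det_ne β v i hvi) P
    _ ≤ ENNReal.ofReal (C0 k n) * (volume (Es β) * (volume (Es v) *
        ∏ l ∈ Finset.univ.erase i, volume (Es (flipv β l)))) := by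
        rw [hvolP]
        exact mul_le_mul_left (ENNReal.ofReal_le_ofReal (det_le_C0 β v i)) _


lemma prod_flip (c : (Fin k → Bool) → ℝ≥0∞) (l : Fin k) :
    ∏ α, c (flipv α l) = ∏ α, c α :=
  Fintype.prod_bijective _ (flipv_bijective l) _ _ (fun _ => rfl)

noncomputable def Pfull (c : (Fin k → Bool) → ℝ≥0∞) (α : Fin k → Bool) : ℝ≥0∞ :=
  c α * ∏ l, c (flipv α l)

lemma prod_Pfull (c : (Fin k → Bool) → ℝ≥0∞) :
    ∏ α, Pfull c α = (∏ α, c α) ^ (k + 1) := by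
  unfold Pfull
  rw [Finset.prod_mul_distrib, Finset.prod_comm]
  have h1 : ∀ l : Fin k, (∏ α, c (flipv α l)) = ∏ α, c α := fun l => prod_flip c l
  calc (∏ α, c α) * ∏ l : Fin k, ∏ α, c (flipv α l)
      = (∏ α, c α) * ∏ l : Fin k, ∏ α, c α := by
        congr 1; exact Finset.prod_congr rfl fun l _ => h1 l
    _ = (∏ α, c α) * (∏ α, c α) ^ k := by rw [Finset.prod_const, Finset.card_univ, Fintype.card_fin]
    _ = (∏ α, c α) ^ (k + 1) := by rw [pow_succ, mul_comm]

lemma card_cube : Fintype.card (Fin k → Bool) = 2 ^ k := by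
  simp [Fintype.card_fun]

lemma nb (Es : (Fin k → Bool) → Set (EuclideanSpace ℝ (Fin n)))
    (hE : ∀ α, MeasurableSet (Es α)) (i0 : Fin k) (α : Fin k → Bool) :
    TT Es ≤ ENNReal.ofReal (C0 k n) * Pfull (fun α => volume (Es α)) α := by
  have hvi : (flipv α i0) i0 ≠ α i0 := by rw [flipv_self]; exact Bool.not_ne_self _
  have h := key Es hE α (flipv α i0) i0 hvi
  refine h.trans (le_of_eq ?_)
  congr 1
  rw [Pfull, ← Finset.mul_prod_erase Finset.univ (fun l => volume (Es (flipv α l)))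
    (Finset.mem_univ i0)]

lemma core (Es : (Fin k → Bool) → Set (EuclideanSpace ℝ (Fin n)))
    (hE : ∀ α, MeasurableSet (Es α)) (v u : Fin k → Bool) (i : Fin k)
    (hvu : v i = u i) :
    volume (Es u) * TT Es ^ (2 ^ k : ℕ) ≤
      (ENNReal.ofReal (C0 k n)) ^ (2 ^ k : ℕ) *
        (volume (Es v) * (∏ α, volume (Es α)) ^ (k + 1)) := by
  classical
  set c : (Fin k → Bool) → ℝ≥0∞ := fun α => volume (Es α) with hc
  set K := ENNReal.ofReal (C0 k n) with hK
  set L := TT Es with hL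
  set β := flipv u i with hβ
  have hu : flipv β i = u := flipv_flipv u i
  have hvi : v i ≠ β i := by
    rw [hβ, flipv_self, hvu]
    intro h
    exact Bool.not_ne_self _ h.symm
  set Q := c β * (c v * ∏ l ∈ Finset.univ.erase i, c (flipv β l)) with hQdef
  have hQ : L ≤ K * Q := key Es hE β v i hvi
  set R : (Fin k → Bool) → ℝ≥0∞ := fun α => if α = β then Q else Pfull c α with hR
  have h1 : L ^ (2 ^ k : ℕ) ≤ ∏ α : Fin k → Bool, (K * R α) := by
    have hcard : L ^ (2 ^ k : ℕ) = ∏ _α : Fin k → Bool, L := by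
      rw [Finset.prod_const, Finset.card_univ, card_cube]
    rw [hcard]
    refine Finset.prod_le_prod' fun α _ => ?_
    by_cases hα : α = β
    · rw [hR]; simp only [hα, if_pos rfl]; exact hQ
    · rw [hR]; simp only [if_neg hα]; exact nb Es hE i α
  have h2 : (∏ α : Fin k → Bool, (K * R α)) = K ^ (2 ^ k : ℕ) * ∏ α, R α := by
    rw [Finset.prod_mul_distrib, Finset.prod_const, Finset.card_univ, card_cube]
  have h3 : (∏ α : Fin k → Bool, R α) = Q * ∏ α ∈ Finset.univ.erase β, Pfull c α := by
    rw [← Finset.mul_prod_erase Finset.univ R (Finset.mem_univ β)]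
    congr 1
    · rw [hR]; simp
    · exact Finset.prod_congr rfl fun α hα => by
        rw [hR]; simp only [if_neg (Finset.ne_of_mem_erase hα)]
  have h5 : c u * Q = c v * Pfull c β := by
    rw [hQdef, Pfull, ← Finset.mul_prod_erase Finset.univ (fun l => c (flipv β l))
      (Finset.mem_univ i)]
    simp only [hu]
    ring
  have h4 : c u * (Q * ∏ α ∈ Finset.univ.erase β, Pfull c α)
      = c v * (∏ α, c α) ^ (k + 1) := by
    calc c u * (Q * ∏ α ∈ Finset.univ.erase β, Pfull c α)
        = (c u * Q) * ∏ α ∈ Finset.univ.erase β, Pfull c α := by ring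
      _ = (c v * Pfull c β) * ∏ α ∈ Finset.univ.erase β, Pfull c α := by rw [h5]
      _ = c v * ∏ α, Pfull c α := by
          rw [mul_assoc, Finset.mul_prod_erase Finset.univ (Pfull c) (Finset.mem_univ β)]
      _ = c v * (∏ α, c α) ^ (k + 1) := by rw [prod_Pfull]
  calc c u * L ^ (2 ^ k : ℕ)
      ≤ c u * (K ^ (2 ^ k : ℕ) * (Q * ∏ α ∈ Finset.univ.erase β, Pfull c α)) := by
        refine mul_le_mul_right ?_ _
        refine h1.trans (le_of_eq ?_)
        rw [h2, h3]
    _ = K ^ (2 ^ k : ℕ) * (c u * (Q * ∏ α ∈ Finset.univ.erase β, Pfull c α)) := by ring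
    _ = K ^ (2 ^ k : ℕ) * (c v * (∏ α, c α) ^ (k + 1)) := by rw [h4]


lemma finset_prod_rpow {ι : Type*} (s : Finset ι) (f : ι → ℝ≥0∞) {r : ℝ} (hr : 0 ≤ r) :
    (∏ i ∈ s, f i) ^ r = ∏ i ∈ s, f i ^ r := by
  classical
  induction s using Finset.induction_on with
  | empty => simp
  | @insert a s ha ih =>
    rw [Finset.prod_insert ha, Finset.prod_insert ha, ENNReal.mul_rpow_of_nonneg _ _ hr, ih]

lemma extract {L K cv cu Pi : ℝ≥0∞} {N M : ℕ} (hN : (N : ℝ) ≠ 0) (hu0 : cu ≠ 0)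
    (hut : cu ≠ ∞) (h : cu * L ^ N ≤ K ^ N * (cv * Pi ^ M)) :
    L ≤ K * ((cv / cu) ^ ((N : ℝ)⁻¹) * Pi ^ ((M : ℝ) * (N : ℝ)⁻¹)) := by
  have h2 : L ^ N ≤ K ^ N * (cv * Pi ^ M) / cu :=
    (ENNReal.le_div_iff_mul_le (Or.inl hu0) (Or.inl hut)).mpr (by rwa [mul_comm])
  have h3 : L = (L ^ N) ^ ((N : ℝ)⁻¹) := by
    rw [← ENNReal.rpow_natCast, ← ENNReal.rpow_mul, mul_inv_cancel₀ hN, ENNReal.rpow_one]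
  rw [h3]
  refine le_trans (ENNReal.rpow_le_rpow h2 (by positivity)) (le_of_eq ?_)
  rw [ENNReal.div_rpow_of_nonneg _ _ (by positivity : (0:ℝ) ≤ (N:ℝ)⁻¹)]
  rw [ENNReal.mul_rpow_of_nonneg _ _ (by positivity : (0:ℝ) ≤ (N:ℝ)⁻¹)]
  rw [ENNReal.mul_rpow_of_nonneg _ _ (by positivity : (0:ℝ) ≤ (N:ℝ)⁻¹)]
  rw [← ENNReal.rpow_natCast K, ← ENNReal.rpow_mul, mul_inv_cancel₀ hN, ENNReal.rpow_one]
  rw [← ENNReal.rpow_natCast Pi, ← ENNReal.rpow_mul]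
  rw [ENNReal.div_rpow_of_nonneg cv cu (by positivity : (0:ℝ) ≤ (N:ℝ)⁻¹)]
  simp only [div_eq_mul_inv]
  ring

lemma finish {L K x ρ Pi GM : ℝ≥0∞} {r τ e p : ℝ}
    (h : L ≤ K * (x ^ r * Pi ^ e)) (hx1 : x ≤ 1) (hxρ : x ≤ ρ)
    (hτ0 : 0 ≤ τ) (hτr : τ ≤ r) (hep : e = p) (hGM : Pi ^ p = GM) :
    L ≤ K * (ρ ^ τ * GM) := by
  refine h.trans (mul_le_mul_right (mul_le_mul' ?_ (le_of_eq (by rw [hep, hGM]))) _)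
  calc x ^ r ≤ x ^ τ := ENNReal.rpow_le_rpow_of_exponent_ge hx1 hτr
    _ ≤ ρ ^ τ := ENNReal.rpow_le_rpow hxρ hτ0


end GowersGain


open GowersGain in
/-- Fix `k ≥ 2`, `n ≥ 1`, `p_k = 2^k/(k+1)`. There exist `τ > 0` and
`C < ∞` such that for all measurable sets `E_α ⊆ ℝⁿ` of finite measure,
`T_k(1_{E_α}) ≤ C ρ^τ ∏_α λ(E_α)^{1/p_k}`, where
`ρ = min_{β ≠ γ} λ(E_β)/λ(E_γ)`. -/
theorem gowers_inner_product_indicator_gain (k n : ℕ) (hk : 2 ≤ k) (hn : 1 ≤ n) :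
    ∃ τ C : ℝ, 0 < τ ∧ 0 < C ∧
      ∀ E : (Fin k → Bool) → Set (EuclideanSpace ℝ (Fin n)),
        (∀ α, MeasurableSet (E α)) → (∀ α, volume (E α) < ∞) →
        (∫⁻ z : EuclideanSpace ℝ (Fin n) × (Fin k → EuclideanSpace ℝ (Fin n)),
            ∏ α : Fin k → Bool,
              (E α).indicator (fun _ => (1 : ℝ≥0∞)) (z.1 + ∑ i, if α i then z.2 i else 0)) ≤
          ENNReal.ofReal C *
            (⨅ (β : Fin k → Bool) (γ : Fin k → Bool) (_ : β ≠ γ),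
              volume (E β) / volume (E γ)) ^ τ *
            ∏ α : Fin k → Bool, (volume (E α)) ^ (((k : ℝ) + 1) / (2 : ℝ) ^ k) := by
  classical
  have hk0 : 0 < k := by omega
  have hk1 : 1 < k := by omega
  refine ⟨((2:ℝ)^(k+1))⁻¹, C0 k n, by positivity, by linarith [one_le_C0 k n], ?_⟩
  intro E hE hfin
  show TT E ≤ _
  set c : (Fin k → Bool) → ℝ≥0∞ := fun α => volume (E α) with hc
  set K := ENNReal.ofReal (C0 k n) with hK
  -- zero case
  by_cases hzero : ∃ α, volume (E α) = 0
  · obtain ⟨α₀, hα₀⟩ := hzero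
    have h := nb (n := n) E hE ⟨0, hk0⟩ α₀
    have hz : TT E ≤ 0 := by
      refine h.trans (le_of_eq ?_)
      simp [Pfull, hα₀]
    exact hz.trans (zero_le)
  push_neg at hzero
  have hne0 : ∀ α, volume (E α) ≠ 0 := hzero
  have hnet : ∀ α, volume (E α) ≠ ∞ := fun α => (hfin α).ne
  -- minimizing pair
  set pairs : Finset ((Fin k → Bool) × (Fin k → Bool)) :=
    Finset.univ.filter (fun q => q.1 ≠ q.2) with hpairs
  have hpne : pairs.Nonempty := by
    refine ⟨((fun _ => false), (fun _ => true)), ?_⟩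
    simp only [hpairs, Finset.mem_filter, Finset.mem_univ, true_and]
    intro h
    exact absurd (congrFun h ⟨0, hk0⟩) (by simp)
  obtain ⟨⟨v, u⟩, hmem, hmin⟩ :=
    Finset.exists_min_image pairs (fun q => volume (E q.1) / volume (E q.2)) hpne
  have hvune : v ≠ u := by
    have := Finset.mem_filter.mp hmem
    exact this.2
  set x := volume (E v) / volume (E u) with hx
  have hxρ : x ≤ ⨅ (β : Fin k → Bool) (γ : Fin k → Bool) (_ : β ≠ γ),
      volume (E β) / volume (E γ) := by
    refine le_iInf fun β => le_iInf fun γ => le_iInf fun hβγ => ?_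
    exact hmin (β, γ) (by simp [hpairs, hβγ])
  have hx1 : x ≤ 1 := by
    have h2 : x ≤ volume (E u) / volume (E v) :=
      hmin (u, v) (by simp [hpairs, Ne.symm hvune])
    have h3 : volume (E u) / volume (E v) = x⁻¹ := by
      rw [hx, ENNReal.inv_div (Or.inl (hnet u)) (Or.inl (hne0 u))]
    by_contra hgt
    push_neg at hgt
    have h4 : x⁻¹ < 1 := ENNReal.inv_lt_one.mpr hgt
    have h5 : x < 1 := lt_of_le_of_lt (h3 ▸ h2) h4
    exact absurd h5 (not_lt.mpr hgt.le)
  have hτ0 : (0:ℝ) ≤ ((2:ℝ)^(k+1))⁻¹ := by positivity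
  have hp0 : (0:ℝ) ≤ ((k:ℝ)+1)/(2:ℝ)^k := by positivity
  have hGM : ((∏ α, volume (E α)) : ℝ≥0∞) ^ (((k:ℝ)+1)/(2:ℝ)^k)
      = ∏ α : Fin k → Bool, (volume (E α)) ^ (((k:ℝ)+1)/(2:ℝ)^k) :=
    finset_prod_rpow Finset.univ _ hp0
  rw [mul_assoc]
  by_cases hshare : ∃ j, v j = u j
  · obtain ⟨j, hj⟩ := hshare
    have hcore := core (n := n) E hE v u j hj
    have hN : ((2^k : ℕ) : ℝ) ≠ 0 := by positivity
    have hext := extract (L := TT E) (K := K) (cv := volume (E v)) (cu := volume (E u))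
      (Pi := ∏ α, volume (E α)) (N := 2^k) (M := k+1) hN (hne0 u) (hnet u) hcore
    refine finish hext hx1 hxρ hτ0 ?_ ?_ hGM
    · push_cast
      refine inv_anti₀ (by positivity) ?_
      exact pow_le_pow_right₀ (by norm_num) (by omega)
    · push_cast
      ring
  · push_neg at hshare
    set j0 : Fin k := ⟨0, hk0⟩ with hj0
    set j1 : Fin k := ⟨1, hk1⟩ with hj1
    have hj01 : j1 ≠ j0 := by simp [hj0, hj1]
    set w := flipv v j0 with hw
    have hvw : v j1 = w j1 := by rw [hw, flipv_ne v hj01]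
    have hwu : w j0 = u j0 := by
      rw [hw, flipv_self]
      have := hshare j0
      cases hb : v j0 <;> cases hbu : u j0 <;> simp [hb, hbu] at this ⊢
    have H1 := core (n := n) E hE v w j1 hvw
    have H2 := core (n := n) E hE w u j0 hwu
    have H3 : volume (E u) * TT E ^ (2^(k+1) : ℕ) ≤
        K ^ (2^(k+1) : ℕ) * (volume (E v) * (∏ α, volume (E α)) ^ (2*(k+1))) := by
      have hmul := mul_le_mul' H1 H2
      rw [show (2:ℕ)^(k+1) = 2^k + 2^k by ring, pow_add, pow_add,
        show 2*(k+1) = (k+1)+(k+1) by ring, pow_add]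
      refine (ENNReal.mul_le_mul_iff_right (hne0 w) (hnet w)).mp ?_
      calc volume (E w) * (volume (E u) * (TT E ^ 2^k * TT E ^ 2^k))
          = (volume (E w) * TT E ^ 2^k) * (volume (E u) * TT E ^ 2^k) := by ring
        _ ≤ (K ^ 2^k * (volume (E v) * (∏ α, volume (E α)) ^ (k+1))) *
            (K ^ 2^k * (volume (E w) * (∏ α, volume (E α)) ^ (k+1))) := hmul
        _ = volume (E w) * (K ^ 2^k * K ^ 2^k *
            (volume (E v) * ((∏ α, volume (E α)) ^ (k+1) * (∏ α, volume (E α)) ^ (k+1)))) := by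
            ring
    have hN : ((2^(k+1) : ℕ) : ℝ) ≠ 0 := by positivity
    have hext := extract (L := TT E) (K := K) (cv := volume (E v)) (cu := volume (E u))
      (Pi := ∏ α, volume (E α)) (N := 2^(k+1)) (M := 2*(k+1)) hN (hne0 u) (hnet u) H3
    refine finish hext hx1 hxρ hτ0 ?_ ?_ hGM
    · push_cast
      exact le_refl _
    · push_cast [pow_succ]
      field_simp
end

section
/- Let n ≥ 1, let Θ : ℝ_{>0} → ℝ_{>0} be a growth function (Θ(ρ) → 0 as ρ → ∞), and let p ∈ [1,∞). Suppose {fᵢ} is a sequence of nonnegative functions on ℝⁿ with ‖fᵢ‖_p = 1, each fᵢ radially symmetric nonincreasing, and each normalized with respect to Θ, i.e. ∫_{fᵢ > ρ} fᵢ^p ≤ Θ(ρ) and ∫_{fᵢ < ρ} fᵢ^p ≤ Θ(ρ^{-1}) for all ρ > 0. Then for every ε > 0 there exist r, R > 0 such that, for all i, ∫_{|x| ≤ r} fᵢ^p dx ≤ ε and ∫_{|x| ≥ R} fᵢ^p dx ≤ ε. -/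
open MeasureTheory Filter

/-- If `{fᵢ}` is a sequence of nonnegative radially symmetric nonincreasing
functions on `ℝⁿ` with `‖fᵢ‖_p = 1`, each normalized with respect to a growth function `Θ`,
then for every `ε > 0` there are `r, R > 0` with `∫_{|x| ≤ r} fᵢ^p ≤ ε` and
`∫_{|x| ≥ R} fᵢ^p ≤ ε` for all `i`. -/
theorem uniform_tightness_of_normalized_rearrangements (n : ℕ) (hn : 1 ≤ n) (p : ℝ)
    (hp : 1 ≤ p) (Θ : ℝ → ℝ) (hΘpos : ∀ ρ > (0 : ℝ), 0 < Θ ρ)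
    (hΘ : Tendsto Θ atTop (nhds 0))
    (f : ℕ → EuclideanSpace ℝ (Fin n) → ℝ)
    (hmeas : ∀ i, Measurable (f i)) (hnonneg : ∀ i x, 0 ≤ f i x)
    (hradial : ∀ i (x y : EuclideanSpace ℝ (Fin n)), ‖x‖ ≤ ‖y‖ → f i y ≤ f i x)
    (hnorm : ∀ i, (∫ x, f i x ^ p) = 1)
    (hupper : ∀ i ρ, 0 < ρ → (∫ x in {x | ρ < f i x}, f i x ^ p) ≤ Θ ρ)
    (hlower : ∀ i ρ, 0 < ρ → (∫ x in {x | f i x < ρ}, f i x ^ p) ≤ Θ ρ⁻¹) :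
    ∀ ε > (0 : ℝ), ∃ r R : ℝ, 0 < r ∧ 0 < R ∧ ∀ i,
      (∫ x in {x : EuclideanSpace ℝ (Fin n) | ‖x‖ ≤ r}, f i x ^ p) ≤ ε ∧
      (∫ x in {x : EuclideanSpace ℝ (Fin n) | R ≤ ‖x‖}, f i x ^ p) ≤ ε := by
  intro ε hε
  -- basic facts about the integrand
  have hgnonneg : ∀ i (x : EuclideanSpace ℝ (Fin n)), 0 ≤ f i x ^ p :=
    fun i x => Real.rpow_nonneg (hnonneg i x) p
  have hgInt : ∀ i, Integrable (fun x : EuclideanSpace ℝ (Fin n) => f i x ^ p) := by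
    intro i
    by_contra h
    have := hnorm i
    rw [integral_undef h] at this
    norm_num at this
  -- volume of unit ball
  set c : ℝ := (volume (Metric.ball (0 : EuclideanSpace ℝ (Fin n)) 1)).toReal with hc
  have hballfin : volume (Metric.ball (0 : EuclideanSpace ℝ (Fin n)) 1) < ⊤ :=
    lt_of_le_of_lt (measure_mono Metric.ball_subset_closedBall) measure_closedBall_lt_top
  have hcpos : 0 < c := by
    refine ENNReal.toReal_pos ?_ hballfin.ne
    exact (Metric.measure_ball_pos volume (0 : EuclideanSpace ℝ (Fin n)) one_pos).ne'
  -- volume of closed balls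
  have hvol : ∀ s : ℝ, 0 ≤ s →
      (volume (Metric.closedBall (0 : EuclideanSpace ℝ (Fin n)) s)).toReal = s ^ n * c := by
    intro s hs
    rw [Measure.addHaar_closedBall _ _ hs, finrank_euclideanSpace_fin, ENNReal.toReal_mul,
      ENNReal.toReal_ofReal (pow_nonneg hs n)]
  have hvolfin : ∀ s : ℝ, volume (Metric.closedBall (0 : EuclideanSpace ℝ (Fin n)) s) < ⊤ :=
    fun s => measure_closedBall_lt_top
  -- choose ρ₀ with Θ ρ₀ ≤ ε/2 and ρ₀ ≥ 1
  obtain ⟨ρ₀, hρ₀1, hρ₀Θ⟩ : ∃ ρ₀ : ℝ, 1 ≤ ρ₀ ∧ Θ ρ₀ ≤ ε / 2 := by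
    have h1 := hΘ.eventually_lt_const (show (0:ℝ) < ε / 2 by linarith)
    obtain ⟨ρ₀, h1, h2⟩ := ((eventually_ge_atTop (1:ℝ)).and h1).exists
    exact ⟨ρ₀, h1, h2.le⟩
  have hρ₀pos : 0 < ρ₀ := lt_of_lt_of_le one_pos hρ₀1
  have hρ₀p : 0 < ρ₀ ^ p := Real.rpow_pos_of_pos hρ₀pos p
  -- choose r
  set δ : ℝ := (ε / 2) / (ρ₀ ^ p * c) with hδ
  have hδpos : 0 < δ := div_pos (by linarith) (mul_pos hρ₀p hcpos)
  set r : ℝ := min 1 δ with hr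
  have hrpos : 0 < r := lt_min one_pos hδpos
  have hrn : r ^ n ≤ δ := by
    calc r ^ n ≤ r ^ 1 := pow_le_pow_of_le_one hrpos.le (min_le_left _ _) hn
    _ = r := pow_one r
    _ ≤ δ := min_le_right _ _
  have hrvol : ρ₀ ^ p *
      (volume (Metric.closedBall (0 : EuclideanSpace ℝ (Fin n)) r)).toReal ≤ ε / 2 := by
    rw [hvol r hrpos.le]
    calc ρ₀ ^ p * (r ^ n * c) ≤ ρ₀ ^ p * (δ * c) := by
          apply mul_le_mul_of_nonneg_left (mul_le_mul_of_nonneg_right hrn hcpos.le) hρ₀p.le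
    _ = ε / 2 := by rw [hδ]; field_simp
  -- choose ρ (small) with Θ ρ⁻¹ ≤ ε
  obtain ⟨M, hM1, hMΘ⟩ : ∃ M : ℝ, 1 ≤ M ∧ Θ M ≤ ε := by
    have h1 := hΘ.eventually_lt_const hε
    obtain ⟨M, h1, h2⟩ := ((eventually_ge_atTop (1:ℝ)).and h1).exists
    exact ⟨M, h1, h2.le⟩
  set ρ : ℝ := M⁻¹ with hρ
  have hMpos : 0 < M := lt_of_lt_of_le one_pos hM1
  have hρpos : 0 < ρ := inv_pos.2 hMpos
  have hρp : 0 < ρ ^ p := Real.rpow_pos_of_pos hρpos p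
  -- choose R
  set R : ℝ := max 1 (2 / (ρ ^ p * c)) with hR
  have hRpos : 0 < R := lt_of_lt_of_le one_pos (le_max_left _ _)
  have hRvol : 1 < ρ ^ p *
      (volume (Metric.closedBall (0 : EuclideanSpace ℝ (Fin n)) R)).toReal := by
    rw [hvol R hRpos.le]
    have hRn : 2 / (ρ ^ p * c) ≤ R ^ n := le_trans (le_max_right _ _)
      (le_self_pow₀ (le_max_left _ _) (by omega))
    have key : ρ ^ p * ((2 / (ρ ^ p * c)) * c) = 2 := by
      field_simp
    calc (1 : ℝ) < ρ ^ p * ((2 / (ρ ^ p * c)) * c) := by rw [key]; norm_num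
    _ ≤ ρ ^ p * (R ^ n * c) := by
          apply mul_le_mul_of_nonneg_left (mul_le_mul_of_nonneg_right hRn hcpos.le) hρp.le
  refine ⟨r, R, hrpos, hRpos, fun i => ?_⟩
  constructor
  · -- small ball bound
    have hSeq : {x : EuclideanSpace ℝ (Fin n) | ‖x‖ ≤ r} =
        Metric.closedBall (0 : EuclideanSpace ℝ (Fin n)) r := by
      ext x; simp [Metric.mem_closedBall, dist_zero_right]
    rw [hSeq]
    set S := Metric.closedBall (0 : EuclideanSpace ℝ (Fin n)) r with hS
    set A := {x : EuclideanSpace ℝ (Fin n) | ρ₀ < f i x} with hA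
    have hAmeas : MeasurableSet A := measurableSet_lt measurable_const (hmeas i)
    have hSmeas : MeasurableSet S := Metric.isClosed_closedBall.measurableSet
    have hsub : S ⊆ A ∪ (S ∩ Aᶜ) := by
      intro x hx
      by_cases h : x ∈ A
      · exact Or.inl h
      · exact Or.inr ⟨hx, h⟩
    have h1 : (∫ x in S, f i x ^ p) ≤ ∫ x in A ∪ (S ∩ Aᶜ), f i x ^ p := by
      apply setIntegral_mono_set ((hgInt i).integrableOn)
        (Eventually.of_forall fun x => hgnonneg i x)
        (HasSubset.Subset.eventuallyLE hsub)
    have h2 : (∫ x in A ∪ (S ∩ Aᶜ), f i x ^ p) =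
        (∫ x in A, f i x ^ p) + ∫ x in S ∩ Aᶜ, f i x ^ p := by
      apply setIntegral_union (Disjoint.mono_right Set.inter_subset_right
        disjoint_compl_right) (hSmeas.inter hAmeas.compl)
        ((hgInt i).integrableOn) ((hgInt i).integrableOn)
    have h3 : (∫ x in A, f i x ^ p) ≤ ε / 2 := le_trans (hupper i ρ₀ hρ₀pos) hρ₀Θ
    have h4 : (∫ x in S ∩ Aᶜ, f i x ^ p) ≤ ε / 2 := by
      have hfin : volume (S ∩ Aᶜ) < ⊤ :=
        lt_of_le_of_lt (measure_mono Set.inter_subset_left) (hvolfin r)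
      have hb : (∫ x in S ∩ Aᶜ, f i x ^ p) ≤ ∫ _x in S ∩ Aᶜ, ρ₀ ^ p := by
        apply setIntegral_mono_on ((hgInt i).integrableOn)
          (integrableOn_const hfin.ne) (hSmeas.inter hAmeas.compl)
        intro x hx
        have hle : f i x ≤ ρ₀ := not_lt.1 hx.2
        exact Real.rpow_le_rpow (hnonneg i x) hle (by linarith)
      rw [setIntegral_const, smul_eq_mul] at hb
      refine le_trans hb (le_trans ?_ hrvol)
      rw [mul_comm]
      apply mul_le_mul_of_nonneg_left ?_ hρ₀p.le
      exact ENNReal.toReal_mono (hvolfin r).ne (measure_mono Set.inter_subset_left)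
    linarith
  · -- large ball bound
    have hclaim : ∀ x : EuclideanSpace ℝ (Fin n), R ≤ ‖x‖ → f i x < ρ := by
      intro x₀ hx₀
      by_contra h
      push_neg at h
      have hball : ∀ y ∈ Metric.closedBall (0 : EuclideanSpace ℝ (Fin n)) R,
          ρ ^ p ≤ f i y ^ p := by
        intro y hy
        rw [Metric.mem_closedBall, dist_zero_right] at hy
        have hyx : f i x₀ ≤ f i y := hradial i y x₀ (le_trans hy hx₀)
        exact Real.rpow_le_rpow hρpos.le (le_trans h hyx) (by linarith)
      have hlow : ρ ^ p *
          (volume (Metric.closedBall (0 : EuclideanSpace ℝ (Fin n)) R)).toReal ≤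
          ∫ y in Metric.closedBall (0 : EuclideanSpace ℝ (Fin n)) R, f i y ^ p := by
        have := setIntegral_mono_on
          (integrableOn_const (hvolfin R).ne : IntegrableOn (fun _ => ρ ^ p) _ _)
          ((hgInt i).integrableOn) Metric.isClosed_closedBall.measurableSet hball
        rwa [setIntegral_const, smul_eq_mul, mul_comm] at this
      have hup : (∫ y in Metric.closedBall (0 : EuclideanSpace ℝ (Fin n)) R, f i y ^ p)
          ≤ 1 := by
        rw [← hnorm i]
        exact setIntegral_le_integral (hgInt i) (Eventually.of_forall fun x => hgnonneg i x)
      linarith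
    have hsub : {x : EuclideanSpace ℝ (Fin n) | R ≤ ‖x‖} ⊆
        {x : EuclideanSpace ℝ (Fin n) | f i x < ρ} := fun x hx => hclaim x hx
    calc (∫ x in {x : EuclideanSpace ℝ (Fin n) | R ≤ ‖x‖}, f i x ^ p)
        ≤ ∫ x in {x : EuclideanSpace ℝ (Fin n) | f i x < ρ}, f i x ^ p := by
          apply setIntegral_mono_set ((hgInt i).integrableOn)
            (Eventually.of_forall fun x => hgnonneg i x)
            (HasSubset.Subset.eventuallyLE hsub)
    _ ≤ Θ ρ⁻¹ := hlower i ρ hρpos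
    _ = Θ M := by rw [hρ, inv_inv]
    _ ≤ ε := hMΘ
end

section
/- Let a < b ∈ ℝ, 1 ≤ q < ∞, B > 0. For each i ∈ ℕ and s ∈ ℝ let I_{i,s} ⊂ [−B,B] be an interval, with (x,s) ↦ 1_{I_{i,s}}(x) jointly measurable. Then the sequence of functions g_i(x) = ∫_a^b 1_{I_{i,s}}(x) ds is precompact in L^q(ℝ). -/
open MeasureTheory Filter

section Aux
open Set

/-- Helly-type selection: a uniformly bounded sequence of monotone functions has a
subsequence converging a.e. to a monotone function. -/
lemma helly_selection {M : ℝ} (F : ℕ → ℝ → ℝ) (hmono : ∀ i, Monotone (F i))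
    (hbd : ∀ i x, F i x ∈ Set.Icc 0 M) :
    ∃ ψ : ℕ → ℕ, StrictMono ψ ∧ ∃ Fb : ℝ → ℝ, Monotone Fb ∧
      ∀ᵐ x : ℝ, Tendsto (fun j => F (ψ j) x) atTop (nhds (Fb x)) := by
  haveI : CompactSpace (Set.Icc (0:ℝ) M) := isCompact_iff_compactSpace.mp isCompact_Icc
  set X := ℚ → Set.Icc (0:ℝ) M
  set seq : ℕ → X := fun n r => ⟨F n r, hbd n r⟩ with hseq
  obtain ⟨aa, ψ, hψ, hconv⟩ := CompactSpace.tendsto_subseq seq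
  set f : ℚ → ℝ := fun r => (aa r : ℝ) with hf
  have hconv' : ∀ r : ℚ, Tendsto (fun j => F (ψ j) r) atTop (nhds (f r)) := by
    intro r
    have := (tendsto_pi_nhds.mp hconv) r
    exact ((continuous_subtype_val.tendsto _).comp this)
  have hfmono : ∀ p r : ℚ, p ≤ r → f p ≤ f r := by
    intro p r hpr
    exact le_of_tendsto_of_tendsto' (hconv' p) (hconv' r)
      (fun j => hmono (ψ j) (by exact_mod_cast hpr))
  -- the envelope
  set S : ℝ → Set ℝ := fun x => (fun r : ℚ => f r) '' {r : ℚ | x < r} with hS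
  have hSne : ∀ x, (S x).Nonempty := by
    intro x
    obtain ⟨r, hr⟩ := exists_rat_gt x
    exact ⟨f r, ⟨r, hr, rfl⟩⟩
  have hSbdd : ∀ x, BddBelow (S x) := by
    intro x
    refine ⟨0, ?_⟩
    rintro y ⟨r, _, rfl⟩
    have h0 : Tendsto (fun _ : ℕ => (0:ℝ)) atTop (nhds 0) := tendsto_const_nhds
    have := le_of_tendsto_of_tendsto' h0 (hconv' r) (fun j => (hbd (ψ j) r).1)
    simpa using this
  set Fb : ℝ → ℝ := fun x => sInf (S x) with hFb
  have hFbmono : Monotone Fb := by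
    intro x y hxy
    refine csInf_le_csInf (hSbdd x) (hSne y) ?_
    rintro z ⟨r, hr, rfl⟩
    exact ⟨r, lt_of_le_of_lt hxy hr, rfl⟩
  have hFble : ∀ (x : ℝ) (r : ℚ), x < (r:ℝ) → Fb x ≤ f r := by
    intro x r hr
    exact csInf_le (hSbdd x) ⟨r, hr, rfl⟩
  refine ⟨ψ, hψ, Fb, hFbmono, ?_⟩
  have hcount : Set.Countable {x | ¬ContinuousAt Fb x} := hFbmono.countable_not_continuousAt
  filter_upwards [hcount.ae_notMem volume] with x hx
  have hcont : ContinuousAt Fb x := not_not.mp hx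
  rw [Metric.tendsto_atTop]
  intro ε hε
  -- upper bound: rational r > x with f r < Fb x + ε/2
  have h1 : ∃ r : ℚ, x < (r:ℝ) ∧ f r < Fb x + ε/2 := by
    obtain ⟨y, hy, hy2⟩ := exists_lt_of_csInf_lt (hSne x) (by linarith : sInf (S x) < Fb x + ε/2)
    obtain ⟨r, hr, rfl⟩ := hy
    exact ⟨r, hr, hy2⟩
  obtain ⟨r, hxr, hfr⟩ := h1
  -- lower bound: rational p < x with f p > Fb x - ε/2
  have h2 : ∃ p : ℚ, (p:ℝ) < x ∧ Fb x - ε/2 < f p := by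
    have := Metric.continuousAt_iff.mp hcont (ε/2) (by linarith)
    obtain ⟨δ, hδ, hδ2⟩ := this
    obtain ⟨p, hp1, hp2⟩ := exists_rat_btwn (show x - δ/2 < x by linarith)
    have hd : dist (x - δ/2) x < δ := by
      rw [Real.dist_eq]; rw [abs_sub_lt_iff]; constructor <;> linarith
    have h3 : |Fb (x - δ/2) - Fb x| < ε/2 := by
      have := hδ2 hd; rwa [Real.dist_eq] at this
    have h4 : Fb x - ε/2 < Fb (x - δ/2) := by
      rw [abs_sub_lt_iff] at h3; linarith [h3.2]
    exact ⟨p, hp2, lt_of_lt_of_le h4 (hFble _ _ hp1)⟩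
  obtain ⟨p, hpx, hfp⟩ := h2
  have hr1 : ∀ᶠ j in atTop, F (ψ j) r < f r + ε/2 := by
    have := (hconv' r) (Metric.ball_mem_nhds _ (by linarith : (0:ℝ) < ε/2))
    filter_upwards [this] with j hj
    simp only [Set.mem_preimage, Metric.mem_ball, Real.dist_eq, abs_sub_lt_iff] at hj
    linarith [hj.1]
  have hr2 : ∀ᶠ j in atTop, f p - ε/2 < F (ψ j) p := by
    have := (hconv' p) (Metric.ball_mem_nhds _ (by linarith : (0:ℝ) < ε/2))
    filter_upwards [this] with j hj
    simp only [Set.mem_preimage, Metric.mem_ball, Real.dist_eq, abs_sub_lt_iff] at hj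
    linarith [hj.2]
  have hfpFb : f p ≤ Fb x := by
    -- f p is a lower bound of S x? f p ≤ f r' for all rationals r' > x since p < x ≤ r'
    refine le_csInf (hSne x) ?_
    rintro y ⟨r', hr', rfl⟩
    exact hfmono p r' (by exact_mod_cast le_of_lt (hpx.trans hr'))
  rw [eventually_atTop] at hr1 hr2
  obtain ⟨N1, hN1⟩ := hr1; obtain ⟨N2, hN2⟩ := hr2
  refine ⟨max N1 N2, fun j hj => ?_⟩
  have e1 := hN1 j (le_trans (le_max_left _ _) hj)
  have e2 := hN2 j (le_trans (le_max_right _ _) hj)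
  have l1 : F (ψ j) x ≤ F (ψ j) r := hmono (ψ j) (le_of_lt hxr)
  have l2 : F (ψ j) p ≤ F (ψ j) x := hmono (ψ j) (le_of_lt hpx)
  rw [Real.dist_eq, abs_sub_lt_iff]
  constructor <;> linarith

/-- a.e. decomposition of an interval indicator as difference of two monotone 0/1 functions
defined through rationals. -/
lemma interval_indicator_decomp (J : Set ℝ) (hJc : J.OrdConnected)
    (hbb : BddBelow J) (hba : BddAbove J) :
    ∀ᵐ x : ℝ,
      Set.indicator {y : ℝ | ∃ r : ℚ, (r:ℝ) ≤ y ∧ (r:ℝ) ∈ J} (fun _ => (1:ℝ)) x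
        - Set.indicator {y : ℝ | ∃ r : ℚ, (r:ℝ) ≤ y ∧ (r:ℝ) ∉ J ∧
            ∃ r' : ℚ, (r':ℝ) ≤ (r:ℝ) ∧ (r':ℝ) ∈ J} (fun _ => (1:ℝ)) x
        = J.indicator (fun _ => (1:ℝ)) x := by
  by_cases hQ : ∃ ρ : ℚ, (ρ:ℝ) ∈ J
  · obtain ⟨ρ, hρ⟩ := hQ
    have hne : J.Nonempty := ⟨ρ, hρ⟩
    set c := sInf J with hc
    set d := sSup J with hd
    have hcd : ({c, d} : Set ℝ).Countable := (Set.toFinite ({c, d} : Set ℝ)).countable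
    filter_upwards [hcd.ae_notMem volume] with x hx
    have hxc : x ≠ c := fun h => hx (by simp [h])
    have hxd : x ≠ d := fun h => hx (by simp [h])
    rcases lt_trichotomy x c with h1 | h1 | h1
    · -- x < inf J : everything is 0
      have hxJ : x ∉ J := fun h => absurd (csInf_le hbb h) (not_le.mpr h1)
      rw [Set.indicator_of_notMem, Set.indicator_of_notMem, Set.indicator_of_notMem hxJ]
      · ring
      · rintro ⟨r, hrx, -, r', hr'r, hr'J⟩
        exact absurd (csInf_le hbb hr'J) (not_le.mpr (by linarith))
      · rintro ⟨r, hrx, hrJ⟩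
        exact absurd (csInf_le hbb hrJ) (not_le.mpr (by linarith))
    · exact absurd h1 hxc
    rcases lt_trichotomy x d with h2 | h2 | h2
    · -- c < x < d : x ∈ J, u = 1, v = 0
      obtain ⟨y, hyJ, hyx⟩ := exists_lt_of_csInf_lt hne h1
      obtain ⟨z, hzJ, hxz⟩ := exists_lt_of_lt_csSup hne h2
      have hxJ : x ∈ J := hJc.out hyJ hzJ ⟨le_of_lt hyx, le_of_lt hxz⟩
      obtain ⟨r, hr1, hr2⟩ := exists_rat_btwn hyx
      have hrJ : (r:ℝ) ∈ J := hJc.out hyJ hxJ ⟨le_of_lt hr1, le_of_lt hr2⟩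
      rw [Set.indicator_of_mem (by exact ⟨r, le_of_lt hr2, hrJ⟩),
        Set.indicator_of_notMem, Set.indicator_of_mem hxJ]
      · ring
      · rintro ⟨r₀, hr₀x, hr₀J, r₀', hr₀'r₀, hr₀'J⟩
        exact hr₀J (hJc.out hr₀'J hxJ ⟨hr₀'r₀, hr₀x⟩)
    · exact absurd h2 hxd
    · -- x > sup J : u = 1, v = 1
      have hxJ : x ∉ J := fun h => absurd (le_csSup hba h) (not_le.mpr h2)
      have hρd : (ρ:ℝ) ≤ d := le_csSup hba hρ
      obtain ⟨r, hr1, hr2⟩ := exists_rat_btwn h2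
      have hrJ : (r:ℝ) ∉ J := fun h => absurd (le_csSup hba h) (not_le.mpr hr1)
      rw [Set.indicator_of_mem (by exact ⟨ρ, by linarith, hρ⟩),
        Set.indicator_of_mem (by exact ⟨r, le_of_lt hr2, hrJ, ρ, by linarith, hρ⟩),
        Set.indicator_of_notMem hxJ]
      ring
  · -- no rational in J : J is a subsingleton, everything vanishes a.e.
    have hsub : J.Subsingleton := by
      intro y hy z hz
      by_contra hne
      rcases lt_or_gt_of_ne hne with h | h
      · obtain ⟨r, hr1, hr2⟩ := exists_rat_btwn h
        exact hQ ⟨r, hJc.out hy hz ⟨le_of_lt hr1, le_of_lt hr2⟩⟩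
      · obtain ⟨r, hr1, hr2⟩ := exists_rat_btwn h
        exact hQ ⟨r, hJc.out hz hy ⟨le_of_lt hr1, le_of_lt hr2⟩⟩
    have hJ0 : volume J = 0 := hsub.measure_zero _
    filter_upwards [measure_eq_zero_iff_ae_notMem.mp hJ0] with x hxJ
    rw [Set.indicator_of_notMem hxJ, Set.indicator_of_notMem, Set.indicator_of_notMem]
    · ring
    · rintro ⟨r, -, -, r', -, hr'J⟩; exact hQ ⟨r', hr'J⟩
    · rintro ⟨r, -, hrJ⟩; exact hQ ⟨r, hrJ⟩
end Aux

/-- Let `a < b`, `1 ≤ q < ∞`, `B > 0`, and for each `i ∈ ℕ`, `s ∈ ℝ` let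
`I_{i,s} ⊆ [−B,B]` be an interval with `(x,s) ↦ 1_{I_{i,s}}(x)` jointly measurable. Then the
sequence `gᵢ(x) = ∫_a^b 1_{I_{i,s}}(x) ds` is precompact in `L^q(ℝ)`: every subsequence has
a further subsequence converging in `L^q` norm. -/
theorem superposition_of_intervals_precompact (a b : ℝ) (hab : a < b) (q : ℝ) (hq : 1 ≤ q)
    (B : ℝ) (hB : 0 < B) (I : ℕ → ℝ → Set ℝ)
    (hIinterval : ∀ i s, (I i s).OrdConnected)
    (hIsub : ∀ i s, I i s ⊆ Set.Icc (-B) B)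
    (hImeas : ∀ i, Measurable fun p : ℝ × ℝ => (I i p.2).indicator (fun _ => (1 : ℝ)) p.1) :
    ∀ φ : ℕ → ℕ, StrictMono φ →
      ∃ ψ : ℕ → ℕ, StrictMono ψ ∧
        ∃ g : ℝ → ℝ,
          Tendsto
            (fun j =>
              eLpNorm
                (fun x =>
                  (∫ s in a..b, (I (φ (ψ j)) s).indicator (fun _ => (1 : ℝ)) x) - g x)
                (ENNReal.ofReal q) volume)
            atTop (nhds 0) := by
  intro φ hφ
  classical
  have hq0 : 0 < q := lt_of_lt_of_le one_pos hq
  have hba : (0:ℝ) ≤ b - a := by linarith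
  -- measurability of membership sections
  have hmemI : ∀ (i : ℕ) (r : ℝ), MeasurableSet {s : ℝ | r ∈ I i s} := by
    intro i r
    have h1 : Measurable fun s : ℝ => (I i s).indicator (fun _ => (1:ℝ)) r :=
      (hImeas i).comp (measurable_const.prodMk measurable_id)
    have h2 : {s : ℝ | r ∈ I i s}
        = (fun s : ℝ => (I i s).indicator (fun _ => (1:ℝ)) r) ⁻¹' {1} := by
      ext s
      by_cases h : r ∈ I i s <;>
        simp [Set.indicator_of_mem, Set.indicator_of_notMem, h]
    rw [h2]; exact h1 (measurableSet_singleton 1)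
  -- the two monotone families
  set U : ℕ → Set (ℝ × ℝ) := fun i =>
    ⋃ r : ℚ, ({s : ℝ | (r:ℝ) ∈ I i s} ×ˢ Set.Ici (r:ℝ)) with hU
  set V : ℕ → Set (ℝ × ℝ) := fun i => ⋃ r : ℚ, ⋃ r' : ℚ,
    ({s : ℝ | (r':ℝ) ≤ (r:ℝ) ∧ (r:ℝ) ∉ I i s ∧ (r':ℝ) ∈ I i s} ×ˢ Set.Ici (r:ℝ)) with hV
  have hUmeas : ∀ i, MeasurableSet (U i) := fun i =>
    MeasurableSet.iUnion fun r => (hmemI i r).prod measurableSet_Ici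
  have hVmeas : ∀ i, MeasurableSet (V i) := by
    intro i
    refine MeasurableSet.iUnion fun r => MeasurableSet.iUnion fun r' => ?_
    have : {s : ℝ | (r':ℝ) ≤ (r:ℝ) ∧ (r:ℝ) ∉ I i s ∧ (r':ℝ) ∈ I i s}
        = {s : ℝ | (r':ℝ) ≤ (r:ℝ)} ∩ ({s : ℝ | (r:ℝ) ∈ I i s}ᶜ ∩ {s : ℝ | (r':ℝ) ∈ I i s}) := by
      ext s; simp [Set.mem_setOf_eq, and_assoc]
    rw [this]
    exact ((MeasurableSet.const _).inter (((hmemI i r).compl).inter (hmemI i r'))).prod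
      measurableSet_Ici
  have hmemU : ∀ i s x, ((s, x) ∈ U i) ↔ ∃ r : ℚ, (r:ℝ) ≤ x ∧ (r:ℝ) ∈ I i s := by
    intro i s x
    simp only [hU, Set.mem_iUnion, Set.mem_prod, Set.mem_Ici, Set.mem_setOf_eq]
    exact ⟨fun ⟨r, h1, h2⟩ => ⟨r, h2, h1⟩, fun ⟨r, h1, h2⟩ => ⟨r, h2, h1⟩⟩
  have hmemV : ∀ i s x, ((s, x) ∈ V i) ↔
      ∃ r : ℚ, (r:ℝ) ≤ x ∧ (r:ℝ) ∉ I i s ∧ ∃ r' : ℚ, (r':ℝ) ≤ (r:ℝ) ∧ (r':ℝ) ∈ I i s := by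
    intro i s x
    simp only [hV, Set.mem_iUnion, Set.mem_prod, Set.mem_Ici, Set.mem_setOf_eq]
    constructor
    · rintro ⟨r, r', ⟨h1, h2, h3⟩, h4⟩; exact ⟨r, h4, h2, r', h1, h3⟩
    · rintro ⟨r, h4, h2, r', h1, h3⟩; exact ⟨r, r', ⟨h1, h2, h3⟩, h4⟩
  set u : ℕ → ℝ → ℝ → ℝ := fun i s x => (U i).indicator (fun _ => (1:ℝ)) (s, x) with hu
  set v : ℕ → ℝ → ℝ → ℝ := fun i s x => (V i).indicator (fun _ => (1:ℝ)) (s, x) with hv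
  have hu_nonneg : ∀ i s x, 0 ≤ u i s x :=
    fun i s x => Set.indicator_nonneg (fun _ _ => zero_le_one) _
  have hv_nonneg : ∀ i s x, 0 ≤ v i s x :=
    fun i s x => Set.indicator_nonneg (fun _ _ => zero_le_one) _
  have hu_le_one : ∀ i s x, u i s x ≤ 1 := by
    intro i s x
    by_cases h : (s, x) ∈ U i
    · simp only [hu, Set.indicator_of_mem h]; exact le_refl 1
    · simp only [hu, Set.indicator_of_notMem h]; exact zero_le_one
  have hv_le_one : ∀ i s x, v i s x ≤ 1 := by
    intro i s x
    by_cases h : (s, x) ∈ V i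
    · simp only [hv, Set.indicator_of_mem h]; exact le_refl 1
    · simp only [hv, Set.indicator_of_notMem h]; exact zero_le_one
  have hu_mono : ∀ i s, Monotone fun x => u i s x := by
    intro i s x x' hxx'
    by_cases h : (s, x) ∈ U i
    · obtain ⟨r, hr1, hr2⟩ := (hmemU i s x).mp h
      have h' : (s, x') ∈ U i := (hmemU i s x').mpr ⟨r, hr1.trans hxx', hr2⟩
      simp only [hu, Set.indicator_of_mem h, Set.indicator_of_mem h']
      exact le_refl 1
    · simp only [hu, Set.indicator_of_notMem h]
      exact hu_nonneg i s x'
  have hv_mono : ∀ i s, Monotone fun x => v i s x := by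
    intro i s x x' hxx'
    by_cases h : (s, x) ∈ V i
    · obtain ⟨r, hr1, hr2, hr3⟩ := (hmemV i s x).mp h
      have h' : (s, x') ∈ V i := (hmemV i s x').mpr ⟨r, hr1.trans hxx', hr2, hr3⟩
      simp only [hv, Set.indicator_of_mem h, Set.indicator_of_mem h']
      exact le_refl 1
    · simp only [hv, Set.indicator_of_notMem h]
      exact hv_nonneg i s x'
  have hu_meas_s : ∀ i x, Measurable fun s => u i s x := fun i x =>
    (measurable_const.indicator (hUmeas i)).comp (measurable_id.prodMk measurable_const)
  have hv_meas_s : ∀ i x, Measurable fun s => v i s x := fun i x =>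
    (measurable_const.indicator (hVmeas i)).comp (measurable_id.prodMk measurable_const)
  haveI hfin : IsFiniteMeasure (volume.restrict (Set.Ioc a b)) :=
    ⟨by rw [Measure.restrict_apply_univ]; exact measure_Ioc_lt_top⟩
  have hu_int : ∀ i x, IntegrableOn (fun s => u i s x) (Set.Ioc a b) volume := by
    intro i x
    refine Integrable.mono' (integrable_const 1)
      ((hu_meas_s i x).aestronglyMeasurable) (ae_of_all _ fun s => ?_)
    rw [Real.norm_eq_abs, abs_le]
    exact ⟨by linarith [hu_nonneg i s x], hu_le_one i s x⟩
  have hv_int : ∀ i x, IntegrableOn (fun s => v i s x) (Set.Ioc a b) volume := by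
    intro i x
    refine Integrable.mono' (integrable_const 1)
      ((hv_meas_s i x).aestronglyMeasurable) (ae_of_all _ fun s => ?_)
    rw [Real.norm_eq_abs, abs_le]
    exact ⟨by linarith [hv_nonneg i s x], hv_le_one i s x⟩
  have hind_meas_s : ∀ i x, Measurable fun s => (I i s).indicator (fun _ => (1:ℝ)) x :=
    fun i x => (hImeas i).comp (measurable_const.prodMk measurable_id)
  have hind_nonneg : ∀ i s x, 0 ≤ (I i s).indicator (fun _ => (1:ℝ)) x :=
    fun i s x => Set.indicator_nonneg (fun _ _ => zero_le_one) _
  have hind_le_one : ∀ i s x, (I i s).indicator (fun _ => (1:ℝ)) x ≤ 1 := by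
    intro i s x
    by_cases h : x ∈ I i s
    · rw [Set.indicator_of_mem h]
    · rw [Set.indicator_of_notMem h]; exact zero_le_one
  -- the sequence and its monotone parts
  set F : ℕ → ℝ → ℝ := fun i x => ∫ s in Set.Ioc a b, u i s x with hF
  set G : ℕ → ℝ → ℝ := fun i x => ∫ s in Set.Ioc a b, v i s x with hG
  set g0 : ℕ → ℝ → ℝ := fun i x => ∫ s in Set.Ioc a b, (I i s).indicator (fun _ => (1:ℝ)) x
    with hg0
  have hg0_eq : ∀ i x, (∫ s in a..b, (I i s).indicator (fun _ => (1:ℝ)) x) = g0 i x :=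
    fun i x => intervalIntegral.integral_of_le (le_of_lt hab)
  have hvol : (volume (Set.Ioc a b)).toReal = b - a := by
    rw [Real.volume_Ioc, ENNReal.toReal_ofReal hba]
  have hconst : (∫ _ in Set.Ioc a b, (1:ℝ)) = b - a := by
    rw [setIntegral_const, measureReal_def, hvol, smul_eq_mul, mul_one]
  have hF_mono : ∀ i, Monotone (F i) := fun i x x' h =>
    integral_mono (hu_int i x) (hu_int i x') (fun s => hu_mono i s h)
  have hG_mono : ∀ i, Monotone (G i) := fun i x x' h =>
    integral_mono (hv_int i x) (hv_int i x') (fun s => hv_mono i s h)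
  have hF_mem : ∀ i x, F i x ∈ Set.Icc 0 (b - a) := by
    intro i x
    constructor
    · exact integral_nonneg fun s => hu_nonneg i s x
    · calc F i x ≤ ∫ _ in Set.Ioc a b, (1:ℝ) :=
            integral_mono (hu_int i x) (integrable_const 1) (fun s => hu_le_one i s x)
        _ = b - a := hconst
  have hG_mem : ∀ i x, G i x ∈ Set.Icc 0 (b - a) := by
    intro i x
    constructor
    · exact integral_nonneg fun s => hv_nonneg i s x
    · calc G i x ≤ ∫ _ in Set.Ioc a b, (1:ℝ) :=
            integral_mono (hv_int i x) (integrable_const 1) (fun s => hv_le_one i s x)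
        _ = b - a := hconst
  -- bounds on g0
  have hg0_nonneg : ∀ i x, 0 ≤ g0 i x := fun i x => integral_nonneg fun s => hind_nonneg i s x
  have hg0_le : ∀ i x, g0 i x ≤ (b - a) * Set.indicator (Set.Icc (-B) B) (fun _ => (1:ℝ)) x := by
    intro i x
    by_cases hx : x ∈ Set.Icc (-B) B
    · rw [Set.indicator_of_mem hx, mul_one]
      have hind_int : IntegrableOn (fun s => (I i s).indicator (fun _ => (1:ℝ)) x)
          (Set.Ioc a b) volume := by
        refine Integrable.mono' (integrable_const 1)
          ((hind_meas_s i x).aestronglyMeasurable) (ae_of_all _ fun s => ?_)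
        rw [Real.norm_eq_abs, abs_le]
        exact ⟨by linarith [hind_nonneg i s x], hind_le_one i s x⟩
      calc g0 i x ≤ ∫ _ in Set.Ioc a b, (1:ℝ) :=
            integral_mono hind_int (integrable_const 1) (fun s => hind_le_one i s x)
        _ = b - a := hconst
    · have hz : ∀ s, (I i s).indicator (fun _ => (1:ℝ)) x = 0 :=
        fun s => Set.indicator_of_notMem (fun h => hx (hIsub i s h)) _
      rw [Set.indicator_of_notMem hx, mul_zero]
      simp only [hg0, hz, integral_zero]
      exact le_refl 0
  have hg0_zero : ∀ i x, x ∉ Set.Icc (-B) B → g0 i x = 0 := by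
    intro i x hx
    have hz : ∀ s, (I i s).indicator (fun _ => (1:ℝ)) x = 0 :=
      fun s => Set.indicator_of_notMem (fun h => hx (hIsub i s h)) _
    simp only [hg0, hz, integral_zero]
  -- a.e. identity F - G = g0
  have hFG : ∀ i, ∀ᵐ x : ℝ, F i x - G i x = g0 i x := by
    intro i
    set e : ℝ × ℝ → ENNReal := fun p =>
      (‖u i p.1 p.2 - v i p.1 p.2 - (I i p.1).indicator (fun _ => (1:ℝ)) p.2‖₊ : ENNReal) with he
    have he_meas : Measurable e := by
      have m1 : Measurable fun p : ℝ × ℝ => u i p.1 p.2 := by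
        have h1 : (fun p : ℝ × ℝ => u i p.1 p.2) = (U i).indicator (fun _ => (1:ℝ)) := by
          funext p; simp only [hu]
        rw [h1]; exact measurable_const.indicator (hUmeas i)
      have m2 : Measurable fun p : ℝ × ℝ => v i p.1 p.2 := by
        have h1 : (fun p : ℝ × ℝ => v i p.1 p.2) = (V i).indicator (fun _ => (1:ℝ)) := by
          funext p; simp only [hv]
        rw [h1]; exact measurable_const.indicator (hVmeas i)
      have m3 : Measurable fun p : ℝ × ℝ => (I i p.1).indicator (fun _ => (1:ℝ)) p.2 :=
        (hImeas i).comp measurable_swap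
      exact ((m1.sub m2).sub m3).nnnorm.coe_nnreal_ennreal
    have hsec : ∀ s : ℝ, ∀ᵐ x : ℝ, u i s x - v i s x = (I i s).indicator (fun _ => (1:ℝ)) x := by
      intro s
      have hbb : BddBelow (I i s) := ⟨-B, fun y hy => (hIsub i s hy).1⟩
      have hba' : BddAbove (I i s) := ⟨B, fun y hy => (hIsub i s hy).2⟩
      filter_upwards [interval_indicator_decomp (I i s) (hIinterval i s) hbb hba'] with x hx
      have hux : u i s x
          = Set.indicator {y : ℝ | ∃ r : ℚ, (r:ℝ) ≤ y ∧ (r:ℝ) ∈ I i s} (fun _ => (1:ℝ)) x := by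
        by_cases h : (s, x) ∈ U i
        · rw [show u i s x = 1 from by simp only [hu, Set.indicator_of_mem h],
            Set.indicator_of_mem (show x ∈ _ from (hmemU i s x).mp h)]
        · rw [show u i s x = 0 from by simp only [hu, Set.indicator_of_notMem h],
            Set.indicator_of_notMem (show x ∉ _ from fun hc => h ((hmemU i s x).mpr hc))]
      have hvx : v i s x
          = Set.indicator {y : ℝ | ∃ r : ℚ, (r:ℝ) ≤ y ∧ (r:ℝ) ∉ I i s ∧
              ∃ r' : ℚ, (r':ℝ) ≤ (r:ℝ) ∧ (r':ℝ) ∈ I i s} (fun _ => (1:ℝ)) x := by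
        by_cases h : (s, x) ∈ V i
        · rw [show v i s x = 1 from by simp only [hv, Set.indicator_of_mem h],
            Set.indicator_of_mem (show x ∈ _ from (hmemV i s x).mp h)]
        · rw [show v i s x = 0 from by simp only [hv, Set.indicator_of_notMem h],
            Set.indicator_of_notMem (show x ∉ _ from fun hc => h ((hmemV i s x).mpr hc))]
      rw [hux, hvx]; exact hx
    have hinner : ∀ s : ℝ, (∫⁻ x : ℝ, e (s, x) ∂volume) = 0 := by
      intro s
      have hz : ∀ᵐ x : ℝ, e (s, x) = 0 := by
        filter_upwards [hsec s] with x hx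
        have h1 : u i s x - v i s x - (I i s).indicator (fun _ => (1:ℝ)) x = 0 := by
          rw [hx]; ring
        simp [he, h1]
      calc (∫⁻ x : ℝ, e (s, x) ∂volume) = ∫⁻ _ : ℝ, 0 ∂volume := lintegral_congr_ae hz
        _ = 0 := lintegral_zero
    have hswap : (∫⁻ x : ℝ, ∫⁻ s in Set.Ioc a b, e (s, x) ∂volume ∂volume) = 0 := by
      rw [lintegral_lintegral_swap (f := fun x s => e (s, x)) (μ := volume) (ν := volume.restrict (Set.Ioc a b)) ((he_meas.comp measurable_swap).aemeasurable)]
      simp [hinner]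
    have houter_meas : Measurable fun x : ℝ => ∫⁻ s in Set.Ioc a b, e (s, x) ∂volume :=
      (he_meas.comp measurable_swap).lintegral_prod_right'
    have hae : ∀ᵐ x : ℝ, (∫⁻ s in Set.Ioc a b, e (s, x) ∂volume) = 0 :=
      (lintegral_eq_zero_iff' houter_meas.aemeasurable).mp hswap
    filter_upwards [hae] with x hx
    have hae_s : ∀ᵐ s ∂(volume.restrict (Set.Ioc a b)), e (s, x) = 0 := by
      refine (lintegral_eq_zero_iff' ?_).mp hx
      exact (he_meas.comp (measurable_id.prodMk measurable_const)).aemeasurable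
    have hcong : (fun s => u i s x - v i s x)
        =ᵐ[volume.restrict (Set.Ioc a b)] fun s => (I i s).indicator (fun _ => (1:ℝ)) x := by
      filter_upwards [hae_s] with s hs
      have h1 : u i s x - v i s x - (I i s).indicator (fun _ => (1:ℝ)) x = 0 := by
        simpa [he] using hs
      linarith
    calc F i x - G i x = ∫ s in Set.Ioc a b, (u i s x - v i s x) :=
          (integral_sub (hu_int i x) (hv_int i x)).symm
      _ = g0 i x := integral_congr_ae hcong
  -- Helly selection, twice
  obtain ⟨ψ1, hψ1, Fb, hFbmono, hFbconv⟩ := helly_selection (M := b - a)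
    (fun n => F (φ n)) (fun n => hF_mono (φ n)) (fun n x => hF_mem (φ n) x)
  obtain ⟨ψ2, hψ2, Gb, hGbmono, hGbconv⟩ := helly_selection (M := b - a)
    (fun n => G (φ (ψ1 n))) (fun n => hG_mono (φ (ψ1 n))) (fun n x => hG_mem (φ (ψ1 n)) x)
  refine ⟨ψ1 ∘ ψ2, hψ1.comp hψ2, fun x => Fb x - Gb x, ?_⟩
  set σ : ℕ → ℕ := fun j => φ (ψ1 (ψ2 j)) with hσ
  set g : ℝ → ℝ := fun x => Fb x - Gb x with hg
  -- a.e. pointwise convergence with bounds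
  have hptwise : ∀ᵐ x : ℝ,
      Tendsto (fun j => g0 (σ j) x) atTop (nhds (g x)) ∧
        (∀ j, |g0 (σ j) x - g x| ≤ 2 * (b - a) * Set.indicator (Set.Icc (-B) B)
          (fun _ => (1:ℝ)) x) := by
    filter_upwards [hFbconv, hGbconv, ae_all_iff.mpr hFG] with x hFx hGx hFGx
    have hFx' : Tendsto (fun j => F (σ j) x) atTop (nhds (Fb x)) :=
      hFx.comp (hψ2.tendsto_atTop)
    have htend : Tendsto (fun j => g0 (σ j) x) atTop (nhds (g x)) := by
      have h1 : Tendsto (fun j => F (σ j) x - G (σ j) x) atTop (nhds (Fb x - Gb x)) :=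
        hFx'.sub hGx
      have h2 : (fun j => F (σ j) x - G (σ j) x) = fun j => g0 (σ j) x :=
        funext fun j => hFGx (σ j)
      rw [h2] at h1; exact h1
    refine ⟨htend, fun j => ?_⟩
    have hgx_mem : g x ∈ Set.Icc 0 ((b - a) * Set.indicator (Set.Icc (-B) B)
        (fun _ => (1:ℝ)) x) := by
      constructor
      · exact ge_of_tendsto' htend fun j => hg0_nonneg (σ j) x
      · exact le_of_tendsto' htend fun j => hg0_le (σ j) x
    by_cases hx : x ∈ Set.Icc (-B) B
    · rw [Set.indicator_of_mem hx, mul_one] at hgx_mem ⊢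
      have h1 := hg0_nonneg (σ j) x
      have h2 := hg0_le (σ j) x
      rw [Set.indicator_of_mem hx, mul_one] at h2
      rw [abs_le]
      constructor <;> [linarith [hgx_mem.2]; linarith [hgx_mem.1]]
    · rw [Set.indicator_of_notMem hx, mul_zero] at hgx_mem ⊢
      rw [hg0_zero (σ j) x hx]
      have : g x = 0 := le_antisymm hgx_mem.2 hgx_mem.1
      rw [this]; simp
  -- measurability of the differences
  have hg0_meas : ∀ i, Measurable fun x => g0 i x := by
    intro i
    exact ((hImeas i).stronglyMeasurable.integral_prod_right').measurable
  have hD_meas : ∀ j, Measurable fun x => g0 (σ j) x - g x := fun j =>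
    (hg0_meas (σ j)).sub ((hFbmono.measurable).sub (hGbmono.measurable))
  -- dominated convergence for the q-th powers
  set p : ENNReal := ENNReal.ofReal q with hp
  have hp0 : p ≠ 0 := by
    simp only [hp, ne_eq, ENNReal.ofReal_eq_zero, not_le]; linarith
  have hpt : p ≠ ⊤ := ENNReal.ofReal_ne_top
  have hptr : p.toReal = q := ENNReal.toReal_ofReal (by linarith)
  set bound : ℝ → ENNReal := fun x =>
    Set.indicator (Set.Icc (-B) B) (fun _ => ENNReal.ofReal ((2 * (b - a)) ^ q)) x with hbound
  have hL : Tendsto (fun j => ∫⁻ x, (‖g0 (σ j) x - g x‖₊ : ENNReal) ^ q ∂volume)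
      atTop (nhds 0) := by
    have h0 : (0 : ENNReal) = ∫⁻ _ : ℝ, 0 ∂volume := by simp
    rw [h0]
    refine tendsto_lintegral_of_dominated_convergence bound
      (fun j => ((hD_meas j).nnnorm.coe_nnreal_ennreal).pow_const q |>.comp measurable_id |>.mono le_rfl le_rfl)
      ?_ ?_ ?_
    · -- bound
      intro j
      filter_upwards [hptwise] with x hx
      by_cases hxI : x ∈ Set.Icc (-B) B
      · have h1 : |g0 (σ j) x - g x| ≤ 2 * (b - a) := by
          have := hx.2 j; rwa [Set.indicator_of_mem hxI, mul_one] at this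
        have h2 : (‖g0 (σ j) x - g x‖₊ : ENNReal) ≤ ENNReal.ofReal (2 * (b - a)) := by
          rw [show ((‖g0 (σ j) x - g x‖₊ : ENNReal)) = ENNReal.ofReal ‖g0 (σ j) x - g x‖ from (ofReal_norm _).symm, Real.norm_eq_abs]
          exact ENNReal.ofReal_le_ofReal h1
        calc (‖g0 (σ j) x - g x‖₊ : ENNReal) ^ q ≤ (ENNReal.ofReal (2 * (b - a))) ^ q :=
              ENNReal.rpow_le_rpow h2 (by linarith)
          _ = ENNReal.ofReal ((2 * (b - a)) ^ q) := by
              rw [← ENNReal.ofReal_rpow_of_nonneg (by linarith) (by linarith)]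
          _ = bound x := by simp only [hbound]; rw [Set.indicator_of_mem hxI]
      · have h1 : g0 (σ j) x - g x = 0 := by
          have := hx.2 j; rw [Set.indicator_of_notMem hxI, mul_zero] at this
          exact abs_eq_zero.mp (le_antisymm this (abs_nonneg _))
        rw [h1]
        simp only [nnnorm_zero, ENNReal.coe_zero]
        rw [ENNReal.zero_rpow_of_pos hq0]
        exact zero_le
    · -- finiteness of the bound
      rw [hbound, lintegral_indicator measurableSet_Icc, setLIntegral_const]
      exact (ENNReal.mul_lt_top ENNReal.ofReal_lt_top measure_Icc_lt_top).ne
    · -- a.e. convergence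
      filter_upwards [hptwise] with x hx
      have hD0 : Tendsto (fun j => g0 (σ j) x - g x) atTop (nhds 0) := by
        have := hx.1.sub (tendsto_const_nhds (x := g x))
        simpa using this
      have hcont : Continuous fun r : ℝ => ((‖r‖₊ : ENNReal)) ^ q :=
        ENNReal.continuous_rpow_const.comp (ENNReal.continuous_coe.comp continuous_nnnorm)
      have := (hcont.tendsto 0).comp hD0
      simp only [nnnorm_zero, ENNReal.coe_zero, ENNReal.zero_rpow_of_pos hq0] at this; exact this
  -- conclude
  have hgoal : (fun j => eLpNorm
      (fun x => (∫ s in a..b, (I (σ j) s).indicator (fun _ => (1:ℝ)) x) - g x) p volume)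
      = fun j => (∫⁻ x, (‖g0 (σ j) x - g x‖₊ : ENNReal) ^ q ∂volume) ^ (1 / q) := by
    funext j
    have h1 : (fun x => (∫ s in a..b, (I (σ j) s).indicator (fun _ => (1:ℝ)) x) - g x)
        = fun x => g0 (σ j) x - g x := funext fun x => by rw [hg0_eq]
    rw [h1, eLpNorm_eq_lintegral_rpow_enorm_toReal hp0 hpt, hptr]
    rfl
  show Tendsto (fun j => eLpNorm
      (fun x => (∫ s in a..b, (I (σ j) s).indicator (fun _ => (1:ℝ)) x) - g x) p volume)
      atTop (nhds 0)
  rw [hgoal]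
  have := ((ENNReal.continuous_rpow_const (y := 1 / q)).tendsto 0).comp hL
  rw [show ((0:ENNReal)) ^ (1/q) = 0 from ENNReal.zero_rpow_of_pos (by positivity)] at this
  exact this
end

section
/- Fix k ≥ 2. Let H(x) = ∫_{ℝ^k} ∏_{α ∈ {0,1}^k, α ≠ 0} 1_{[−1,1]}(x + α·h⃗) dh⃗ for x ∈ ℝ, where α·h⃗ = ∑ᵢ αᵢhᵢ. Then H is a continuous, nonnegative, even function whose support is exactly the interval [−(k+1)/(k−1), (k+1)/(k−1)]. -/
open MeasureTheory

/-- `H(x) = ∫_{ℝ^k} ∏_{α ∈ {0,1}^k, α ≠ 0} 1_{[−1,1]}(x + α·h⃗) dh⃗`. -/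
noncomputable def Hfun (k : ℕ) (x : ℝ) : ℝ :=
  ∫ h : Fin k → ℝ,
    ∏ α ∈ Finset.univ.filter (fun α : Fin k → Bool => α ≠ fun _ => false),
      Set.indicator (Set.Icc (-1 : ℝ) 1) (fun _ => (1 : ℝ))
        (x + ∑ i, if α i then h i else 0)

namespace HfunProof

/-- The index finset of nonzero boolean vectors. -/
def Fk (k : ℕ) : Finset (Fin k → Bool) :=
  Finset.univ.filter (fun α : Fin k → Bool => α ≠ fun _ => false)

/-- The linear form `h ↦ α · h`. -/
def S {k : ℕ} (α : Fin k → Bool) (h : Fin k → ℝ) : ℝ := ∑ i, if α i then h i else 0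

lemma Hfun_def (k : ℕ) (x : ℝ) :
    Hfun k x = ∫ h : Fin k → ℝ, ∏ α ∈ Fk k,
      Set.indicator (Set.Icc (-1 : ℝ) 1) (fun _ => (1 : ℝ)) (x + S α h) := rfl

/-- The feasible set. -/
def Aset (k : ℕ) (x : ℝ) : Set (Fin k → ℝ) :=
  {h | ∀ α ∈ Fk k, x + S α h ∈ Set.Icc (-1 : ℝ) 1}

lemma continuous_S {k : ℕ} (α : Fin k → Bool) : Continuous (S α) := by
  unfold S
  refine continuous_finset_sum _ fun i _ => ?_
  by_cases hi : α i
  · simpa [hi] using continuous_apply i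
  · simpa [hi] using continuous_const

lemma measurableSet_Aset (k : ℕ) (x : ℝ) : MeasurableSet (Aset k x) := by
  have hA : Aset k x = ⋂ α ∈ Fk k, (fun h => x + S α h) ⁻¹' Set.Icc (-1 : ℝ) 1 := by
    ext h; simp [Aset, Set.mem_iInter]
  rw [hA]
  exact MeasurableSet.iInter fun α => MeasurableSet.iInter fun _ =>
    (continuous_const.add (continuous_S α)).measurable measurableSet_Icc

lemma prod_eq_indicator {k : ℕ} (x : ℝ) (h : Fin k → ℝ) :
    (∏ α ∈ Fk k, Set.indicator (Set.Icc (-1 : ℝ) 1) (fun _ => (1 : ℝ)) (x + S α h)) =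
      Set.indicator (Aset k x) (fun _ => (1 : ℝ)) h := by
  by_cases hA : h ∈ Aset k x
  · rw [Set.indicator_of_mem hA]
    exact Finset.prod_eq_one fun α hα => Set.indicator_of_mem (hA α hα) _
  · rw [Set.indicator_of_notMem hA]
    obtain ⟨α, hα, hxα⟩ : ∃ α ∈ Fk k, x + S α h ∉ Set.Icc (-1 : ℝ) 1 := by
      simpa [Aset] using hA
    exact Finset.prod_eq_zero hα (Set.indicator_of_notMem hxα _)

lemma Hfun_eq (k : ℕ) (x : ℝ) : Hfun k x = (volume (Aset k x)).toReal := by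
  rw [Hfun_def]
  simp_rw [prod_eq_indicator]
  rw [MeasureTheory.integral_indicator_const (1 : ℝ) (measurableSet_Aset k x), smul_eq_mul,
    mul_one]
  rfl

lemma Hfun_nonneg (k : ℕ) (x : ℝ) : 0 ≤ Hfun k x := by
  rw [Hfun_eq]; exact ENNReal.toReal_nonneg

lemma exists_true {k : ℕ} {α : Fin k → Bool} (hα : α ∈ Fk k) : ∃ i, α i = true := by
  by_contra hcon
  push_neg at hcon
  have hα' : α = fun _ => false := funext fun i => by
    cases hαi : α i
    · rfl
    · exact absurd hαi (hcon i)
  simp [Fk, hα'] at hα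

lemma single_mem_Fk {k : ℕ} (i : Fin k) : (fun j => decide (j = i)) ∈ Fk k := by
  simp only [Fk, Finset.mem_filter, Finset.mem_univ, true_and]
  intro hcon
  have h := congrFun hcon i
  simp at h

lemma S_single {k : ℕ} (i : Fin k) (h : Fin k → ℝ) : S (fun j => decide (j = i)) h = h i := by
  unfold S
  simp [Finset.sum_ite_eq']

lemma ones_mem_Fk {k : ℕ} (hk : 0 < k) : (fun _ : Fin k => true) ∈ Fk k := by
  simp only [Fk, Finset.mem_filter, Finset.mem_univ, true_and]
  intro hcon
  have h := congrFun hcon ⟨0, hk⟩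
  simp at h

lemma S_ones {k : ℕ} (h : Fin k → ℝ) : S (fun _ => true) h = ∑ i, h i := by simp [S]

/-- `S α` as a linear map. -/
noncomputable def Lmap {k : ℕ} (α : Fin k → Bool) : (Fin k → ℝ) →ₗ[ℝ] ℝ :=
  ∑ i, if α i then LinearMap.proj i else 0

lemma Lmap_apply {k : ℕ} (α : Fin k → Bool) (h : Fin k → ℝ) : Lmap α h = S α h := by
  unfold Lmap S
  rw [LinearMap.sum_apply]
  refine Finset.sum_congr rfl fun i _ => ?_
  by_cases hi : α i <;> simp [hi]

lemma S_single_vec {k : ℕ} {α : Fin k → Bool} {i : Fin k} (hi : α i = true) :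
    S α (Pi.single i (1 : ℝ)) = 1 := by
  unfold S
  rw [Finset.sum_eq_single i]
  · simp [hi]
  · intro j _ hj
    rcases Bool.eq_false_or_eq_true (α j) with h | h <;> simp [h, Pi.single_eq_of_ne hj]
  · intro hi'; exact absurd (Finset.mem_univ i) hi'

lemma hyperplane_zero {k : ℕ} {α : Fin k → Bool} (hα : α ∈ Fk k) (c : ℝ) :
    volume {h : Fin k → ℝ | S α h = c} = 0 := by
  obtain ⟨i, hi⟩ := exists_true hα
  have hne : Lmap α ≠ 0 := by
    intro h0
    have h1 : S α (Pi.single i 1) = 1 := S_single_vec hi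
    rw [← Lmap_apply, h0] at h1
    simpa using h1
  obtain ⟨v, hv⟩ : ∃ v, Lmap α v = c := by
    refine ⟨c • (Pi.single i 1 : Fin k → ℝ), ?_⟩
    rw [LinearMap.map_smul, Lmap_apply, S_single_vec hi, smul_eq_mul, mul_one]
  have hset : {h : Fin k → ℝ | S α h = c}
      = (fun h => -v + h) ⁻¹' ((LinearMap.ker (Lmap α) : Submodule ℝ (Fin k → ℝ)) :
          Set (Fin k → ℝ)) := by
    ext h
    simp only [Set.mem_preimage, SetLike.mem_coe, LinearMap.mem_ker, map_add, map_neg, hv,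
      Set.mem_setOf_eq, Lmap_apply]
    constructor
    · intro h'; rw [h']; ring
    · intro h'; linarith
  rw [hset, measure_preimage_add]
  exact Measure.addHaar_submodule volume _ (by simpa [LinearMap.ker_eq_top] using hne)

lemma Aset_neg (k : ℕ) (x : ℝ) : Aset k (-x) = (fun h : Fin k → ℝ => -h) ⁻¹' Aset k x := by
  ext h
  simp only [Aset, Set.mem_preimage, Set.mem_setOf_eq]
  refine forall₂_congr fun α hα => ?_
  have hS : S α (-h) = -S α h := by
    unfold S
    rw [← Finset.sum_neg_distrib]
    refine Finset.sum_congr rfl fun i _ => ?_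
    by_cases hi : α i <;> simp [hi]
  rw [hS, Set.mem_Icc, Set.mem_Icc]
  constructor <;> intro h' <;> constructor <;> linarith [h'.1, h'.2]

lemma Hfun_even (k : ℕ) (x : ℝ) : Hfun k (-x) = Hfun k x := by
  rw [Hfun_eq, Hfun_eq, Aset_neg]
  exact congrArg ENNReal.toReal (Measure.measure_preimage_neg volume (Aset k x))

lemma Aset_eq_empty {k : ℕ} (hk : 2 ≤ k) {x : ℝ}
    (hx : ((k : ℝ) + 1) / ((k : ℝ) - 1) < |x|) : Aset k x = ∅ := by
  have hk2 : (2 : ℝ) ≤ (k : ℝ) := by exact_mod_cast hk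
  have hkpos : (0 : ℝ) < (k : ℝ) - 1 := by linarith
  rw [Set.eq_empty_iff_forall_notMem]
  intro h hh
  have hsingle : ∀ i : Fin k, -1 ≤ x + h i ∧ x + h i ≤ 1 := fun i => by
    have hm := hh _ (single_mem_Fk i)
    rw [S_single] at hm
    exact ⟨hm.1, hm.2⟩
  have hones : -1 ≤ x + ∑ i, h i ∧ x + ∑ i, h i ≤ 1 := by
    have hm := hh _ (ones_mem_Fk (by omega))
    rw [S_ones] at hm
    exact ⟨hm.1, hm.2⟩
  have hsum_le : ∑ i, h i ≤ (k : ℝ) - (k : ℝ) * x := by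
    calc ∑ i, h i ≤ ∑ _i : Fin k, (1 - x) :=
          Finset.sum_le_sum fun i _ => by linarith [(hsingle i).2]
      _ = (k : ℝ) - (k : ℝ) * x := by
          rw [Finset.sum_const, nsmul_eq_mul, Finset.card_univ, Fintype.card_fin]; ring
  have hsum_ge : -(k : ℝ) - (k : ℝ) * x ≤ ∑ i, h i := by
    calc -(k : ℝ) - (k : ℝ) * x = ∑ _i : Fin k, (-1 - x) := by
          rw [Finset.sum_const, nsmul_eq_mul, Finset.card_univ, Fintype.card_fin]; ring
      _ ≤ ∑ i, h i := Finset.sum_le_sum fun i _ => by linarith [(hsingle i).1]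
  have h1 : ((k : ℝ) - 1) * x ≤ (k : ℝ) + 1 := by nlinarith [hones.1]
  have h2 : -((k : ℝ) + 1) ≤ ((k : ℝ) - 1) * x := by nlinarith [hones.2]
  have habs : |x| * ((k : ℝ) - 1) ≤ (k : ℝ) + 1 := by
    rcases abs_cases x with ⟨hax, _⟩ | ⟨hax, _⟩ <;> rw [hax] <;> nlinarith
  have : |x| ≤ ((k : ℝ) + 1) / ((k : ℝ) - 1) := (le_div_iff₀ hkpos).2 habs
  linarith

lemma Hfun_zero {k : ℕ} (hk : 2 ≤ k) {x : ℝ} (hx : ((k : ℝ) + 1) / ((k : ℝ) - 1) < |x|) :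
    Hfun k x = 0 := by
  rw [Hfun_eq, Aset_eq_empty hk hx]
  simp

lemma Aset_subset_box (k : ℕ) (x : ℝ) :
    Aset k x ⊆ Set.pi Set.univ (fun _ : Fin k => Set.Icc (-1 - x) (1 - x)) := by
  intro h hh i _
  have hm := hh _ (single_mem_Fk i)
  rw [S_single, Set.mem_Icc] at hm
  rw [Set.mem_Icc]
  constructor <;> linarith [hm.1, hm.2]

lemma volume_Aset_lt_top (k : ℕ) (x : ℝ) : volume (Aset k x) < ⊤ := by
  refine lt_of_le_of_lt (measure_mono (Aset_subset_box k x)) ?_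
  rw [volume_pi_pi]
  refine ENNReal.prod_lt_top fun i _ => ?_
  rw [Real.volume_Icc]
  exact ENNReal.ofReal_lt_top

lemma Hfun_pos {k : ℕ} (hk : 2 ≤ k) {x : ℝ} (hx : |x| < ((k : ℝ) + 1) / ((k : ℝ) - 1)) :
    0 < Hfun k x := by
  have hk2 : (2 : ℝ) ≤ (k : ℝ) := by exact_mod_cast hk
  have hkm : (0 : ℝ) < (k : ℝ) - 1 := by linarith
  have hkp : (0 : ℝ) < (k : ℝ) + 1 := by linarith
  have hk0 : (0 : ℝ) < (k : ℝ) := by linarith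
  set K := (k : ℝ) with hK
  set t : ℝ := -2 * x / (K + 1) with ht
  set r : ℝ := |x| * (K - 1) / (K + 1) with hr
  have hr0 : 0 ≤ r := by
    rw [hr]
    have := abs_nonneg x
    positivity
  have hr1 : r < 1 := by
    rw [hr, div_lt_one hkp]
    have hmul : |x| * (K - 1) < ((K + 1) / (K - 1)) * (K - 1) :=
      mul_lt_mul_of_pos_right hx hkm
    rw [div_mul_cancel₀ _ (ne_of_gt hkm)] at hmul
    linarith
  set δ : ℝ := (1 - r) / K with hδ
  have hδ0 : 0 < δ := div_pos (by linarith) hk0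
  set box : Set (Fin k → ℝ) := Set.pi Set.univ (fun _ => Set.Ioo (t - δ) (t + δ)) with hbox
  have hsub : box ⊆ Aset k x := by
    intro h hh α hα
    set s : Finset (Fin k) := Finset.univ.filter (fun i => α i = true) with hs
    have hS : S α h = ∑ i ∈ s, h i := (Finset.sum_filter _ _).symm
    have hcard1 : 1 ≤ s.card := by
      obtain ⟨i, hi⟩ := exists_true hα
      exact Finset.card_pos.mpr ⟨i, by simp [hs, hi]⟩
    have hcardk : s.card ≤ k := by
      simpa using (Finset.card_filter_le Finset.univ (fun i => α i = true))
    set j : ℝ := (s.card : ℝ) with hj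
    have hj1 : 1 ≤ j := by rw [hj]; exact_mod_cast hcard1
    have hjk : j ≤ K := by rw [hj, hK]; exact_mod_cast hcardk
    have hmain : |x + j * t| ≤ r := by
      have hxjt : x + j * t = x * ((K + 1 - 2 * j) / (K + 1)) := by
        rw [ht]; field_simp; ring
      have habs2 : |K + 1 - 2 * j| ≤ K - 1 := by
        rw [abs_le]; constructor <;> linarith
      calc |x + j * t| = |x| * (|K + 1 - 2 * j| / (K + 1)) := by
            rw [hxjt, abs_mul, abs_div, abs_of_pos hkp]
        _ ≤ |x| * ((K - 1) / (K + 1)) := by gcongr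
        _ = r := by rw [hr]; ring
    have herr : |(∑ i ∈ s, h i) - j * t| ≤ 1 - r := by
      have hrw : (∑ i ∈ s, h i) - j * t = ∑ i ∈ s, (h i - t) := by
        rw [Finset.sum_sub_distrib, Finset.sum_const, nsmul_eq_mul, hj]
      rw [hrw]
      calc |∑ i ∈ s, (h i - t)| ≤ ∑ i ∈ s, |h i - t| := Finset.abs_sum_le_sum_abs _ _
        _ ≤ ∑ _i ∈ s, δ := Finset.sum_le_sum fun i _ => by
            have hi := hh i (Set.mem_univ i)
            rw [abs_le]
            constructor
            · linarith [hi.1]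
            · linarith [hi.2]
        _ = j * δ := by rw [Finset.sum_const, nsmul_eq_mul, hj]
        _ ≤ K * δ := mul_le_mul_of_nonneg_right hjk hδ0.le
        _ = 1 - r := by rw [hδ]; field_simp
    rw [Set.mem_Icc, ← abs_le]
    calc |x + S α h| = |(x + j * t) + ((∑ i ∈ s, h i) - j * t)| := by rw [hS]; ring_nf
      _ ≤ |x + j * t| + |(∑ i ∈ s, h i) - j * t| := abs_add_le _ _
      _ ≤ r + (1 - r) := add_le_add hmain herr
      _ = 1 := by ring
  have hvol : 0 < volume (Aset k x) := by
    refine lt_of_lt_of_le ?_ (measure_mono hsub)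
    rw [hbox, volume_pi_pi]
    rw [CanonicallyOrderedAdd.prod_pos]
    intro i _
    rw [Real.volume_Ioo]
    exact ENNReal.ofReal_pos.2 (by linarith)
  rw [Hfun_eq]
  exact ENNReal.toReal_pos hvol.ne' (volume_Aset_lt_top k x).ne

lemma ind_nonneg (y : ℝ) : 0 ≤ Set.indicator (Set.Icc (-1 : ℝ) 1) (fun _ => (1 : ℝ)) y :=
  Set.indicator_nonneg (fun _ _ => zero_le_one) y

lemma ind_le_one (y : ℝ) : Set.indicator (Set.Icc (-1 : ℝ) 1) (fun _ => (1 : ℝ)) y ≤ 1 := by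
  classical
  by_cases hy : y ∈ Set.Icc (-1 : ℝ) 1 <;> simp [Set.indicator_apply, hy]

lemma measurable_integrand (k : ℕ) (x : ℝ) :
    Measurable (fun h : Fin k → ℝ => ∏ α ∈ Fk k,
      Set.indicator (Set.Icc (-1 : ℝ) 1) (fun _ => (1 : ℝ)) (x + S α h)) := by
  refine Finset.measurable_prod _ fun α _ => ?_
  exact (measurable_const.indicator measurableSet_Icc).comp
    (continuous_const.add (continuous_S α)).measurable

lemma ind_continuousAt {c y : ℝ} (h1 : y + c ≠ -1) (h2 : y + c ≠ 1) :
    ContinuousAt (fun x : ℝ => Set.indicator (Set.Icc (-1 : ℝ) 1) (fun _ => (1 : ℝ)) (x + c))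
      y := by
  have hcont : Continuous fun x : ℝ => |x + c| := (continuous_id.add continuous_const).abs
  rcases lt_trichotomy (|y + c|) 1 with hlt | heq | hgt
  · have hopen : IsOpen {x : ℝ | |x + c| < 1} := isOpen_lt hcont continuous_const
    have hev : (fun x : ℝ => Set.indicator (Set.Icc (-1 : ℝ) 1) (fun _ => (1 : ℝ)) (x + c))
        =ᶠ[nhds y] fun _ => (1 : ℝ) := by
      refine Filter.eventuallyEq_of_mem (hopen.mem_nhds hlt) fun x hx => ?_
      rw [Set.mem_setOf_eq, abs_lt] at hx
      exact Set.indicator_of_mem (by rw [Set.mem_Icc]; constructor <;> linarith) _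
    exact hev.continuousAt
  · rcases (abs_eq (by norm_num : (0:ℝ) ≤ 1)).1 heq with h | h
    · exact absurd h h2
    · exact absurd h h1
  · have hopen : IsOpen {x : ℝ | 1 < |x + c|} := isOpen_lt continuous_const hcont
    have hev : (fun x : ℝ => Set.indicator (Set.Icc (-1 : ℝ) 1) (fun _ => (1 : ℝ)) (x + c))
        =ᶠ[nhds y] fun _ => (0 : ℝ) := by
      refine Filter.eventuallyEq_of_mem (hopen.mem_nhds hgt) fun x hx => ?_
      rw [Set.mem_setOf_eq] at hx
      refine Set.indicator_of_notMem ?_ _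
      rw [Set.mem_Icc]
      intro hmem
      rcases abs_cases (x + c) with ⟨ha, _⟩ | ⟨ha, _⟩ <;> rw [ha] at hx <;>
        [linarith [hmem.2]; linarith [hmem.1]]
    exact hev.continuousAt

lemma Hfun_continuous (k : ℕ) : Continuous (Hfun k) := by
  have hrw : Hfun k = fun x => ∫ h : Fin k → ℝ, ∏ α ∈ Fk k,
      Set.indicator (Set.Icc (-1 : ℝ) 1) (fun _ => (1 : ℝ)) (x + S α h) :=
    funext fun x => Hfun_def k x
  rw [hrw, continuous_iff_continuousAt]
  intro x₀
  set B : Set (Fin k → ℝ) := Set.pi Set.univ fun _ : Fin k => Set.Icc (-(2 + |x₀|)) (2 + |x₀|)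
    with hB
  refine MeasureTheory.continuousAt_of_dominated
    (bound := Set.indicator B (fun _ => (1 : ℝ)))
    (Filter.Eventually.of_forall fun x => (measurable_integrand k x).aestronglyMeasurable)
    ?_ ?_ ?_
  · -- bound
    have hball : ∀ᶠ x in nhds x₀, |x - x₀| < 1 := by
      filter_upwards [Metric.ball_mem_nhds x₀ one_pos] with x hx
      simpa [Real.dist_eq] using hx
    filter_upwards [hball] with x hx
    refine MeasureTheory.ae_of_all _ fun h => ?_
    rw [Real.norm_eq_abs, abs_of_nonneg (Finset.prod_nonneg fun α _ => ind_nonneg _)]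
    by_cases hbox : h ∈ B
    · rw [Set.indicator_of_mem hbox]
      exact Finset.prod_le_one (fun α _ => ind_nonneg _) (fun α _ => ind_le_one _)
    · rw [Set.indicator_of_notMem hbox]
      obtain ⟨i, hi⟩ : ∃ i, h i ∉ Set.Icc (-(2 + |x₀|)) (2 + |x₀|) := by
        rw [hB, Set.mem_univ_pi] at hbox
        push_neg at hbox
        obtain ⟨i, hi⟩ := hbox
        exact ⟨i, hi⟩
      have h2 : 2 + |x₀| < |h i| := by
        rw [Set.mem_Icc, not_and_or, not_le, not_le] at hi
        rcases hi with h' | h'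
        · exact lt_of_lt_of_le (by linarith) (neg_le_abs (h i))
        · exact lt_of_lt_of_le h' (le_abs_self (h i))
      have hx1 : |x| < 1 + |x₀| := by
        have := abs_sub_abs_le_abs_sub x x₀
        linarith
      have hnot : x + h i ∉ Set.Icc (-1 : ℝ) 1 := by
        rw [Set.mem_Icc, not_and_or, not_le, not_le]
        have h3 : 1 < |x + h i| := by
          have h4 := abs_sub_abs_le_abs_sub (h i) (-x)
          rw [sub_neg_eq_add, abs_neg] at h4
          have : |h i + x| = |x + h i| := by rw [add_comm]
          rw [this] at h4
          linarith
        rcases abs_cases (x + h i) with ⟨ha, _⟩ | ⟨ha, _⟩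
        · right; linarith
        · left; linarith
      refine le_of_eq (Finset.prod_eq_zero (single_mem_Fk i) ?_)
      rw [S_single]
      exact Set.indicator_of_notMem hnot _
  · -- integrability of bound
    rw [integrable_indicator_iff (MeasurableSet.univ_pi fun _ => measurableSet_Icc)]
    refine integrableOn_const (ne_of_lt ?_) (by simp)
    rw [volume_pi_pi]
    refine ENNReal.prod_lt_top fun i _ => ?_
    rw [Real.volume_Icc]
    exact ENNReal.ofReal_lt_top
  · -- ae continuity
    have hbad0 : volume (⋃ α ∈ Fk k,
        ({h : Fin k → ℝ | S α h = -1 - x₀} ∪ {h : Fin k → ℝ | S α h = 1 - x₀})) = 0 := by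
      refine le_antisymm (le_trans (measure_biUnion_finset_le _ _) (le_of_eq ?_)) zero_le
      refine Finset.sum_eq_zero fun α hα => ?_
      rw [measure_union_null_iff]
      exact ⟨hyperplane_zero hα _, hyperplane_zero hα _⟩
    have hae : ∀ᵐ h : Fin k → ℝ, h ∉ ⋃ α ∈ Fk k,
        ({h : Fin k → ℝ | S α h = -1 - x₀} ∪ {h : Fin k → ℝ | S α h = 1 - x₀}) := by
      exact MeasureTheory.measure_eq_zero_iff_ae_notMem.mp hbad0
    refine hae.mono fun h hh => ?_
    have hne : ∀ α ∈ Fk k, x₀ + S α h ≠ -1 ∧ x₀ + S α h ≠ 1 := by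
      intro α hα
      constructor <;> intro hc <;> refine hh (Set.mem_biUnion hα ?_)
      · exact Or.inl (by rw [Set.mem_setOf_eq]; linarith)
      · exact Or.inr (by rw [Set.mem_setOf_eq]; linarith)
    exact tendsto_finset_prod _ fun α hα => ind_continuousAt (hne α hα).1 (hne α hα).2

end HfunProof

/-- For `k ≥ 2`, `H` is continuous, nonnegative, even, and its support is
exactly the interval `[−(k+1)/(k−1), (k+1)/(k−1)]`. -/
theorem Hfun_properties (k : ℕ) (hk : 2 ≤ k) :
    Continuous (Hfun k) ∧ (∀ x, 0 ≤ Hfun k x) ∧ (∀ x, Hfun k (-x) = Hfun k x) ∧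
      tsupport (Hfun k) =
        Set.Icc (-(((k : ℝ) + 1) / ((k : ℝ) - 1))) (((k : ℝ) + 1) / ((k : ℝ) - 1)) := by
  have hk2 : (2 : ℝ) ≤ (k : ℝ) := by exact_mod_cast hk
  set M : ℝ := ((k : ℝ) + 1) / ((k : ℝ) - 1) with hM
  have hM0 : 0 < M := div_pos (by linarith) (by linarith)
  refine ⟨HfunProof.Hfun_continuous k, HfunProof.Hfun_nonneg k, HfunProof.Hfun_even k, ?_⟩
  have h1 : Function.support (Hfun k) ⊆ Set.Icc (-M) M := by
    intro x hx
    by_contra hc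
    rw [Set.mem_Icc, not_and_or, not_le, not_le] at hc
    have hMx : M < |x| := by
      rcases hc with h' | h'
      · exact lt_of_lt_of_le (by linarith) (neg_le_abs x)
      · exact lt_of_lt_of_le h' (le_abs_self x)
    exact hx (HfunProof.Hfun_zero hk hMx)
  have h2 : Set.Ioo (-M) M ⊆ Function.support (Hfun k) := by
    intro x hx
    have hMx : |x| < M := by
      rw [abs_lt]
      exact ⟨hx.1, hx.2⟩
    exact (HfunProof.Hfun_pos hk hMx).ne'
  refine subset_antisymm (closure_minimal h1 isClosed_Icc) ?_
  rw [← closure_Ioo (show -M ≠ M from by linarith)]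
  exact closure_mono h2
end

section
/- Let n ≥ 1 and B ⊂ ℝⁿ a centered ball of positive radius. Let ψ : B → ℝ/ℤ be measurable and τ, η > 0 small. Suppose λ({(x,h₁) ∈ B² : x+h₁ ∈ B and |e^{2πi(ψ(x+h₁)−ψ(x))} − 1| > τ}) < η·λ({(x,h₁) ∈ B² : x+h₁ ∈ B}). Then there exist a constant c ∈ ℝ/ℤ and K > 0 (depending only on n) such that λ({x ∈ B : |e^{2πiψ(x)}e^{−2πic} − 1| > O(τ)}) < Kη·λ(B). -/
open MeasureTheory Complex Real


open scoped ENNReal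

lemma phase_norm_one (t : ℝ) : ‖Complex.exp (2*π*I*(t:ℂ))‖ = 1 := by
  rw [Complex.norm_exp]
  simp

lemma phase_chain {τ : ℝ} (a b c : ℝ)
    (h1 : ‖Complex.exp (2*π*I*((b - a : ℝ):ℂ)) - 1‖ ≤ τ)
    (h2 : ‖Complex.exp (2*π*I*((c - b : ℝ):ℂ)) - 1‖ ≤ τ) :
    ‖Complex.exp (2*π*I*((c - a : ℝ):ℂ)) - 1‖ ≤ 2*τ := by
  have e1 : (2*π*I*((c-b:ℝ):ℂ)) + (2*π*I*((b-a:ℝ):ℂ)) = 2*π*I*((c-a:ℝ):ℂ) := by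
    push_cast; ring
  have key : Complex.exp (2*π*I*((c - a : ℝ):ℂ)) - 1
      = Complex.exp (2*π*I*((c - b : ℝ):ℂ)) * (Complex.exp (2*π*I*((b - a : ℝ):ℂ)) - 1)
        + (Complex.exp (2*π*I*((c - b : ℝ):ℂ)) - 1) := by
    rw [mul_sub, mul_one, ← Complex.exp_add, e1]; ring
  calc ‖Complex.exp (2*π*I*((c - a : ℝ):ℂ)) - 1‖
      ≤ ‖Complex.exp (2*π*I*((c - b : ℝ):ℂ)) * (Complex.exp (2*π*I*((b - a : ℝ):ℂ)) - 1)‖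
        + ‖Complex.exp (2*π*I*((c - b : ℝ):ℂ)) - 1‖ := by rw [key]; exact norm_add_le _ _
    _ ≤ τ + τ := by
        rw [norm_mul, phase_norm_one, one_mul]
        exact add_le_add h1 h2
    _ = 2*τ := by ring

lemma phase_mul (a c : ℝ) :
    Complex.exp (2*π*I*((a:ℝ):ℂ)) * Complex.exp (-(2*π*I*((c:ℝ):ℂ)))
      = Complex.exp (2*π*I*((a - c : ℝ):ℂ)) := by
  rw [← Complex.exp_add]
  congr 1
  push_cast; ring

lemma mid_mem {n : ℕ} {R : ℝ} {x₀ x z : EuclideanSpace ℝ (Fin n)}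
    (h0 : x₀ ∈ Metric.ball (0:EuclideanSpace ℝ (Fin n)) (R/2))
    (hx : x ∈ Metric.ball (0:EuclideanSpace ℝ (Fin n)) R)
    (hz : z ∈ Metric.ball ((1/2 : ℝ) • (x₀ + x)) (R/4)) :
    z ∈ Metric.ball (0:EuclideanSpace ℝ (Fin n)) R ∧
      z - x₀ ∈ Metric.ball (0:EuclideanSpace ℝ (Fin n)) R ∧
      x - z ∈ Metric.ball (0:EuclideanSpace ℝ (Fin n)) R := by
  rw [Metric.mem_ball, dist_eq_norm] at hz
  rw [Metric.mem_ball, dist_zero_right] at h0 hx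
  simp only [Metric.mem_ball, dist_zero_right]
  set m := (1/2 : ℝ) • (x₀ + x) with hm
  have hmd : ‖m - x₀‖ ≤ (‖x‖ + ‖x₀‖)/2 := by
    have e : m - x₀ = (1/2 : ℝ) • (x - x₀) := by rw [hm]; module
    have h12 : ‖(1/2:ℝ)‖ = 1/2 := by norm_num
    have htr := norm_sub_le x x₀
    rw [e, norm_smul, h12]
    linarith
  have hmx : ‖x - m‖ ≤ (‖x‖ + ‖x₀‖)/2 := by
    have e : x - m = (1/2 : ℝ) • (x - x₀) := by rw [hm]; module
    have h12 : ‖(1/2:ℝ)‖ = 1/2 := by norm_num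
    have htr := norm_sub_le x x₀
    rw [e, norm_smul, h12]
    linarith
  have hmn : ‖m‖ ≤ (‖x₀‖ + ‖x‖)/2 := by
    have e : m = (1/2 : ℝ) • (x₀ + x) := hm
    have h12 : ‖(1/2:ℝ)‖ = 1/2 := by norm_num
    have htr := norm_add_le x₀ x
    rw [e, norm_smul, h12]
    linarith
  refine ⟨?_, ?_, ?_⟩
  · have := norm_add_le (z - m) m
    simp only [sub_add_cancel] at this
    linarith
  · have h1 : ‖z - x₀‖ ≤ ‖z - m‖ + ‖m - x₀‖ := by
      have := norm_add_le (z - m) (m - x₀)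
      simpa [sub_add_sub_cancel] using this
    linarith
  · have h1 : ‖x - z‖ ≤ ‖x - m‖ + ‖m - z‖ := by
      have := norm_add_le (x - m) (m - z)
      simpa [sub_add_sub_cancel] using this
    have : ‖m - z‖ = ‖z - m‖ := norm_sub_rev m z
    linarith

/-- There is a constant `K > 0` depending only on `n` such that: if `B` is
a centered ball in `ℝⁿ`, `ψ : B → ℝ/ℤ` is measurable, `τ, η > 0` are small, and
`|e^{2πi(ψ(x+h₁)−ψ(x))} − 1| ≤ τ` for all `(x,h₁) ∈ B²` with `x+h₁ ∈ B` outside a set of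
relative measure `η`, then there is a constant phase `c` with
`|e^{2πiψ(x)}e^{−2πic} − 1| ≤ Kτ` for all `x ∈ B` outside a set of measure `Kη λ(B)`. -/
theorem approx_invariant_phase_is_constant (n : ℕ) (hn : 1 ≤ n) :
    ∃ K : ℝ, 0 < K ∧
      ∀ R : ℝ, 0 < R →
        ∀ ψ : EuclideanSpace ℝ (Fin n) → ℝ, Measurable ψ →
          ∀ τ η : ℝ, 0 < τ → τ ≤ 1 → 0 < η → η ≤ 1 →
            volume {p : EuclideanSpace ℝ (Fin n) × EuclideanSpace ℝ (Fin n) |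
                  p.1 ∈ Metric.ball 0 R ∧ p.2 ∈ Metric.ball 0 R ∧
                  p.1 + p.2 ∈ Metric.ball (0 : EuclideanSpace ℝ (Fin n)) R ∧
                  τ < ‖Complex.exp (2 * π * I * ((ψ (p.1 + p.2) - ψ p.1 : ℝ) : ℂ)) - 1‖} <
                ENNReal.ofReal η *
                  volume {p : EuclideanSpace ℝ (Fin n) × EuclideanSpace ℝ (Fin n) |
                    p.1 ∈ Metric.ball 0 R ∧ p.2 ∈ Metric.ball 0 R ∧
                    p.1 + p.2 ∈ Metric.ball (0 : EuclideanSpace ℝ (Fin n)) R} →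
            ∃ c : ℝ,
              volume {x | x ∈ Metric.ball (0 : EuclideanSpace ℝ (Fin n)) R ∧
                  K * τ < ‖Complex.exp (2 * π * I * ((ψ x : ℝ) : ℂ)) *
                    Complex.exp (-(2 * π * I * (c : ℂ))) - 1‖} <
                ENNReal.ofReal (K * η) *
                  volume (Metric.ball (0 : EuclideanSpace ℝ (Fin n)) R) := by
  classical
  refine ⟨4 * 8^n, by positivity, ?_⟩
  intro R hR ψ hψ τ η hτ hτ1 hη hη1 hhyp
  haveI : Nonempty (Fin n) := ⟨⟨0, hn⟩⟩
  have h8 : (1:ℝ) ≤ 8^n := one_le_pow₀ (by norm_num)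
  have h2n : (1:ℝ) ≤ 2^n := one_le_pow₀ (by norm_num)
  have hK2 : (2:ℝ) ≤ 4 * 8^n := by nlinarith
  set B : Set (EuclideanSpace ℝ (Fin n)) := Metric.ball (0:EuclideanSpace ℝ (Fin n)) R with hB
  set W : ℝ≥0∞ := volume (Metric.ball (0:EuclideanSpace ℝ (Fin n)) 1) with hW
  have hW0 : W ≠ 0 := (Metric.measure_ball_pos volume 0 one_pos).ne'
  have hWt : W ≠ ⊤ := measure_ball_lt_top.ne
  have hball : ∀ (c : EuclideanSpace ℝ (Fin n)) (r : ℝ), 0 < r →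
      volume (Metric.ball c r) = ENNReal.ofReal (r^n) * W := by
    intro c r hr
    rw [Measure.addHaar_ball volume c hr.le, finrank_euclideanSpace_fin]
  have hvolB : volume B = ENNReal.ofReal (R^n) * W := hball 0 R hR
  -- the difference set
  set S : Set (EuclideanSpace ℝ (Fin n) × EuclideanSpace ℝ (Fin n)) :=
    {p : EuclideanSpace ℝ (Fin n) × EuclideanSpace ℝ (Fin n) | p.1 ∈ B ∧ p.2 ∈ B ∧ p.2 - p.1 ∈ B ∧
      τ < ‖Complex.exp (2*π*I*((ψ p.2 - ψ p.1 : ℝ):ℂ)) - 1‖} with hSdef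
  have hcont : Continuous fun t : ℝ => ‖Complex.exp (2*π*I*(t:ℂ)) - 1‖ := by fun_prop
  have hSm : MeasurableSet S := by
    rw [hSdef]
    simp only [Set.setOf_and]
    refine MeasurableSet.inter (measurable_fst Metric.isOpen_ball.measurableSet)
      (MeasurableSet.inter (measurable_snd Metric.isOpen_ball.measurableSet)
        (MeasurableSet.inter ((measurable_snd.sub measurable_fst) Metric.isOpen_ball.measurableSet) ?_))
    have hmeas : Measurable fun p : EuclideanSpace ℝ (Fin n) × EuclideanSpace ℝ (Fin n) =>
        ‖Complex.exp (2*π*I*((ψ p.2 - ψ p.1 : ℝ):ℂ)) - 1‖ :=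
      hcont.measurable.comp ((hψ.comp measurable_snd).sub (hψ.comp measurable_fst))
    exact hmeas measurableSet_Ioi
  -- step A : volume S < η * (vol B)²
  have hvolS : volume S < ENNReal.ofReal η * (volume B * volume B) := by
    have hT : MeasurePreserving
        (fun z : EuclideanSpace ℝ (Fin n) × EuclideanSpace ℝ (Fin n) => (z.1, z.1 + z.2))
        volume volume := by
      rw [Measure.volume_eq_prod]
      exact measurePreserving_prod_add volume volume
    have hpre : (fun z : EuclideanSpace ℝ (Fin n) × EuclideanSpace ℝ (Fin n) =>
          (z.1, z.1 + z.2)) ⁻¹' S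
        = {p : EuclideanSpace ℝ (Fin n) × EuclideanSpace ℝ (Fin n) |
            p.1 ∈ B ∧ p.2 ∈ B ∧ p.1 + p.2 ∈ B ∧
            τ < ‖Complex.exp (2*π*I*((ψ (p.1 + p.2) - ψ p.1 : ℝ):ℂ)) - 1‖} := by
      ext p
      simp only [Set.mem_preimage, hSdef, Set.mem_setOf_eq, add_sub_cancel_left]
      tauto
    have h1 : volume S
        = volume {p : EuclideanSpace ℝ (Fin n) × EuclideanSpace ℝ (Fin n) |
            p.1 ∈ B ∧ p.2 ∈ B ∧ p.1 + p.2 ∈ B ∧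
            τ < ‖Complex.exp (2*π*I*((ψ (p.1 + p.2) - ψ p.1 : ℝ):ℂ)) - 1‖} := by
      rw [← hT.measure_preimage hSm.nullMeasurableSet, hpre]
    have h2 : volume {p : EuclideanSpace ℝ (Fin n) × EuclideanSpace ℝ (Fin n) |
          p.1 ∈ B ∧ p.2 ∈ B ∧ p.1 + p.2 ∈ B} ≤ volume B * volume B := by
      have hsub : {p : EuclideanSpace ℝ (Fin n) × EuclideanSpace ℝ (Fin n) |
          p.1 ∈ B ∧ p.2 ∈ B ∧ p.1 + p.2 ∈ B} ⊆ B ×ˢ B := by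
        rintro p ⟨h1, h2, _⟩; exact ⟨h1, h2⟩
      calc volume {p : EuclideanSpace ℝ (Fin n) × EuclideanSpace ℝ (Fin n) |
            p.1 ∈ B ∧ p.2 ∈ B ∧ p.1 + p.2 ∈ B} ≤ volume (B ×ˢ B) := measure_mono hsub
        _ = volume B * volume B := by rw [Measure.volume_eq_prod, Measure.prod_prod]
    rw [h1]
    exact lt_of_lt_of_le hhyp (mul_le_mul_right h2 _)
  -- marginals
  set g : EuclideanSpace ℝ (Fin n) → ℝ≥0∞ := fun a => volume (Prod.mk a ⁻¹' S) with hgdef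
  set h2 : EuclideanSpace ℝ (Fin n) → ℝ≥0∞ := fun b => volume ((fun a => (a, b)) ⁻¹' S) with hh2def
  have hgm : Measurable g := measurable_measure_prodMk_left hSm
  have hh2m : Measurable h2 := measurable_measure_prodMk_right hSm
  have hgint : ∫⁻ a, g a = volume S := by
    rw [hgdef, Measure.volume_eq_prod, Measure.prod_apply hSm]
  have hh2int : ∫⁻ b, h2 b = volume S := by
    rw [hh2def, Measure.volume_eq_prod, Measure.prod_apply_symm hSm]
  -- choice of x₀
  set t : ℝ≥0∞ := ENNReal.ofReal (2^n * η) * (ENNReal.ofReal (R^n) * W) with htdef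
  have hBh : volume (Metric.ball (0:EuclideanSpace ℝ (Fin n)) (R/2))
      = ENNReal.ofReal ((R/2)^n) * W := hball 0 (R/2) (by linarith)
  have hsc : ENNReal.ofReal (2^n*η) * ENNReal.ofReal (R^n) * ENNReal.ofReal ((R/2)^n)
      = ENNReal.ofReal η * ENNReal.ofReal (R^n) * ENNReal.ofReal (R^n) := by
    calc ENNReal.ofReal (2^n*η) * ENNReal.ofReal (R^n) * ENNReal.ofReal ((R/2)^n)
        = ENNReal.ofReal (2^n*η*(R^n*(R/2)^n)) := by
          rw [mul_assoc, ← ENNReal.ofReal_mul (by positivity : (0:ℝ) ≤ R^n),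
            ← ENNReal.ofReal_mul (by positivity : (0:ℝ) ≤ 2^n*η)]
      _ = ENNReal.ofReal (η*(R^n*R^n)) := by
          congr 1
          rw [div_pow]
          field_simp
      _ = ENNReal.ofReal η * ENNReal.ofReal (R^n) * ENNReal.ofReal (R^n) := by
          rw [mul_assoc, ← ENNReal.ofReal_mul (by positivity : (0:ℝ) ≤ R^n),
            ← ENNReal.ofReal_mul hη.le]
  have htBh : t * volume (Metric.ball (0:EuclideanSpace ℝ (Fin n)) (R/2))
      = ENNReal.ofReal η * (volume B * volume B) := by
    rw [htdef, hBh, hvolB]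
    calc ENNReal.ofReal (2^n*η) * (ENNReal.ofReal (R^n) * W) * (ENNReal.ofReal ((R/2)^n) * W)
        = (ENNReal.ofReal (2^n*η) * ENNReal.ofReal (R^n) * ENNReal.ofReal ((R/2)^n)) * (W*W) := by
          ring
      _ = (ENNReal.ofReal η * ENNReal.ofReal (R^n) * ENNReal.ofReal (R^n)) * (W*W) := by rw [hsc]
      _ = ENNReal.ofReal η * (ENNReal.ofReal (R^n) * W * (ENNReal.ofReal (R^n) * W)) := by ring
  have hex : ∃ x₀ ∈ Metric.ball (0:EuclideanSpace ℝ (Fin n)) (R/2), g x₀ < t := by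
    by_contra hcon
    push_neg at hcon
    have h1 : t * volume (Metric.ball (0:EuclideanSpace ℝ (Fin n)) (R/2))
        ≤ ∫⁻ a in Metric.ball (0:EuclideanSpace ℝ (Fin n)) (R/2), g a := by
      rw [← setLIntegral_const]
      exact setLIntegral_mono hgm hcon
    have h2' : ∫⁻ a in Metric.ball (0:EuclideanSpace ℝ (Fin n)) (R/2), g a ≤ volume S := by
      rw [← hgint]
      exact setLIntegral_le_lintegral _ _
    rw [htBh] at h1
    exact absurd (lt_of_le_of_lt (h1.trans h2') hvolS) (lt_irrefl _)
  obtain ⟨x₀, hx₀Bh, hgx₀⟩ := hex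
  refine ⟨ψ x₀, ?_⟩
  have hx₀B : x₀ ∈ B := Metric.ball_subset_ball (by linarith) hx₀Bh
  set Bad : Set (EuclideanSpace ℝ (Fin n)) := {x : EuclideanSpace ℝ (Fin n) |
      x ∈ Metric.ball (0:EuclideanSpace ℝ (Fin n)) R ∧
      4 * 8^n * τ < ‖Complex.exp (2*π*I*((ψ x : ℝ):ℂ)) *
        Complex.exp (-(2*π*I*((ψ x₀ : ℝ):ℂ))) - 1‖} with hBaddef
  have hBadB : Bad ⊆ B := fun x hx => hx.1
  have hvolBne : volume B ≠ 0 := by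
    rw [hvolB]
    exact mul_ne_zero (ENNReal.ofReal_pos.mpr (by positivity)).ne' hW0
  have hvolBt : volume B ≠ ⊤ := by
    rw [hvolB]; exact ENNReal.mul_ne_top ENNReal.ofReal_ne_top hWt
  show volume Bad < ENNReal.ofReal (4 * 8^n * η) * volume B
  by_cases hsmall : η < 1/(2*8^n)
  · -- small η case
    set m2 : ℝ≥0∞ := ENNReal.ofReal ((R/4)^n/2) * W with hm2def
    have hm2ne : m2 ≠ 0 := mul_ne_zero (ENNReal.ofReal_pos.mpr (by positivity)).ne' hW0
    have hm2t : m2 ≠ ⊤ := ENNReal.mul_ne_top ENNReal.ofReal_ne_top hWt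
    have hmsplit : ENNReal.ofReal ((R/4)^n) * W = m2 + m2 := by
      rw [hm2def, ← add_mul, ← ENNReal.ofReal_add (by positivity) (by positivity)]
      norm_num
    have h84 : (8:ℝ)^n = 2^n * 4^n := by rw [← mul_pow]; norm_num
    have hreal : 2^n * η * R^n ≤ (R/4)^n/2 := by
      rw [div_pow]
      have hstep1 : 2^n * η * R^n ≤ 2^n * (1/(2*(8:ℝ)^n)) * R^n := by
        apply mul_le_mul_of_nonneg_right _ (by positivity)
        exact mul_le_mul_of_nonneg_left hsmall.le (by positivity)
      have hstep2 : 2^n * (1/(2*(8:ℝ)^n)) * R^n = R^n/4^n/2 := by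
        rw [h84]
        have h2p : (0:ℝ) < 2^n := by positivity
        have h4p : (0:ℝ) < 4^n := by positivity
        field_simp
      linarith
    have ht_le : t ≤ m2 := by
      rw [htdef, hm2def, ← mul_assoc, ← ENNReal.ofReal_mul (by positivity : (0:ℝ) ≤ 2^n*η)]
      exact mul_le_mul_left (ENNReal.ofReal_le_ofReal hreal) W
    -- every x in Bad has h2 x ≥ m2
    have hkey : ∀ x ∈ Bad, m2 ≤ h2 x := by
      intro x hx
      obtain ⟨hxB, hxτ⟩ := hx
      have hMsub : Metric.ball ((1/2:ℝ) • (x₀ + x)) (R/4)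
          ⊆ (Prod.mk x₀ ⁻¹' S) ∪ ((fun a => (a, x)) ⁻¹' S) := by
        intro z hzM
        obtain ⟨hz1, hz2, hz3⟩ := mid_mem hx₀Bh hxB hzM
        by_contra hno
        simp only [Set.mem_union, not_or, Set.mem_preimage, hSdef, Set.mem_setOf_eq] at hno
        obtain ⟨hno1, hno2⟩ := hno
        have hhop1 : ‖Complex.exp (2*π*I*((ψ z - ψ x₀ : ℝ):ℂ)) - 1‖ ≤ τ := by
          by_contra hc
          exact hno1 ⟨hx₀B, hz1, hz2, lt_of_not_ge hc⟩
        have hhop2 : ‖Complex.exp (2*π*I*((ψ x - ψ z : ℝ):ℂ)) - 1‖ ≤ τ := by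
          by_contra hc
          exact hno2 ⟨hz1, hxB, hz3, lt_of_not_ge hc⟩
        have hchain := phase_chain (ψ x₀) (ψ z) (ψ x) hhop1 hhop2
        rw [phase_mul] at hxτ
        nlinarith
      have hMvol : volume (Metric.ball ((1/2:ℝ) • (x₀ + x)) (R/4))
          = ENNReal.ofReal ((R/4)^n) * W := hball _ (R/4) (by linarith)
      have h1 : ENNReal.ofReal ((R/4)^n) * W ≤ g x₀ + h2 x := by
        rw [← hMvol]
        calc volume (Metric.ball ((1/2:ℝ) • (x₀ + x)) (R/4))
            ≤ volume ((Prod.mk x₀ ⁻¹' S) ∪ ((fun a => (a, x)) ⁻¹' S)) := measure_mono hMsub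
          _ ≤ g x₀ + h2 x := measure_union_le _ _
      rw [hmsplit] at h1
      have hgle : g x₀ ≤ m2 := le_of_lt (lt_of_lt_of_le hgx₀ ht_le)
      have hfin : m2 + m2 ≤ m2 + h2 x := h1.trans (by exact add_le_add_left hgle _)
      exact (ENNReal.add_le_add_iff_left hm2t).mp hfin
    -- Markov
    have hmarkov : m2 * volume Bad ≤ volume S := by
      calc m2 * volume Bad = ∫⁻ _ in Bad, m2 := (setLIntegral_const _ _).symm
        _ ≤ ∫⁻ x in Bad, h2 x := setLIntegral_mono hh2m hkey
        _ ≤ ∫⁻ x, h2 x := setLIntegral_le_lintegral _ _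
        _ = volume S := hh2int
    have hsc2 : ENNReal.ofReal η * ENNReal.ofReal (R^n)
        ≤ ENNReal.ofReal ((R/4)^n/2) * ENNReal.ofReal (4*8^n*η) := by
      rw [← ENNReal.ofReal_mul hη.le, ← ENNReal.ofReal_mul (by positivity : (0:ℝ) ≤ (R/4)^n/2)]
      apply ENNReal.ofReal_le_ofReal
      have hkey2 : (R/4)^n/2 * (4*(8:ℝ)^n*η) = 2 * 2^n * (η * R^n) := by
        rw [div_pow, h84]
        have h4p : (0:ℝ) < 4^n := by positivity
        field_simp
        ring
      rw [hkey2]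
      have hnn : (0:ℝ) ≤ η * R^n := by positivity
      nlinarith [hnn, h2n]
    have hfinal : ENNReal.ofReal η * (volume B * volume B)
        ≤ m2 * (ENNReal.ofReal (4 * 8^n * η) * volume B) := by
      rw [hvolB, hm2def]
      calc ENNReal.ofReal η * (ENNReal.ofReal (R^n) * W * (ENNReal.ofReal (R^n) * W))
          = (ENNReal.ofReal η * ENNReal.ofReal (R^n)) * (W * (ENNReal.ofReal (R^n) * W)) := by
            ring
        _ ≤ (ENNReal.ofReal ((R/4)^n/2) * ENNReal.ofReal (4*8^n*η))
              * (W * (ENNReal.ofReal (R^n) * W)) := mul_le_mul_left hsc2 _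
        _ = ENNReal.ofReal ((R/4)^n/2) * W
              * (ENNReal.ofReal (4*8^n*η) * (ENNReal.ofReal (R^n) * W)) := by ring
    have hlt : m2 * volume Bad < m2 * (ENNReal.ofReal (4 * 8^n * η) * volume B) :=
      lt_of_le_of_lt hmarkov (lt_of_lt_of_le hvolS hfinal)
    exact (ENNReal.mul_lt_mul_iff_right hm2ne hm2t).mp hlt
  · -- large η case
    push_neg at hsmall
    have h2K : (2:ℝ≥0∞) ≤ ENNReal.ofReal (4 * 8^n * η) := by
      rw [show (2:ℝ≥0∞) = ENNReal.ofReal 2 by norm_num]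
      apply ENNReal.ofReal_le_ofReal
      rw [div_le_iff₀ (by positivity)] at hsmall
      nlinarith
    calc volume Bad ≤ volume B := measure_mono hBadB
      _ < 2 * volume B := by
          conv_lhs => rw [← one_mul (volume B)]
          exact (ENNReal.mul_lt_mul_iff_left hvolBne hvolBt).mpr ENNReal.one_lt_two
      _ ≤ ENNReal.ofReal (4 * 8^n * η) * volume B := mul_le_mul_left h2K _
end
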